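/- arXiv:2605.26107 — 3 statements merged into one kernel-verified Lean document; each statement's English description precedes it below -/
import Mathlib

section
/- Let N ≥ 2 and let q ∈ Δ_N° be nonuniform; put p(θ) = u + θ(q − u). If 0 < θ_1 < θ_2 ≤ 1, then for every capacity 1 ≤ C < N one has H_C(p(θ_2)) > H_C(p(θ_1)); equivalently, 1 − H_C(p(θ_2)) < 1 − H_C(p(θ_1)). That is, the stationary move-to-front search cost under p(θ_2) is strictly smaller in the usual stochastic order than under p(θ_1). -/
open Finset

/-- The exact stationary LRU hit rate, given by the residual-subset formula;
under the independent reference model `P_p(D ≤ C) = H_C(p)` for the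
stationary move-to-front search cost `D`. -/
noncomputable def hitRate (N C : ℕ) (p : Fin N → ℝ) : ℝ :=
  ∑ m ∈ Finset.Icc (N - C + 1) N,
    (-1 : ℝ) ^ (m - (N - C + 1)) * ((m - 2).choose (m - (N - C + 1)) : ℝ) *
      ∑ R ∈ (Finset.univ : Finset (Fin N)).powersetCard m,
        (∑ i ∈ R, p i ^ 2) / (∑ i ∈ R, p i)

namespace RadialAux

variable {ι : Type*} [DecidableEq ι]

noncomputable def AS (w : ι → ℝ) (c : ℝ) (U : Finset ι) : ℝ :=
  ∑ B ∈ U.powerset, (-1 : ℝ) ^ B.card / (c + ∑ a ∈ B, w a)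

noncomputable def AS2 (w : ι → ℝ) (c : ℝ) (U : Finset ι) : ℝ :=
  ∑ B ∈ U.powerset, (-1 : ℝ) ^ B.card / (c + ∑ a ∈ B, w a) ^ 2

noncomputable def ASD (w v : ι → ℝ) (c d : ℝ) (U : Finset ι) : ℝ :=
  ∑ B ∈ U.powerset, (-1 : ℝ) ^ B.card / ((c + ∑ a ∈ B, w a) * (d + ∑ a ∈ B, v a))

lemma sum_powerset_neg_one (U : Finset ι) (hU : U ≠ ∅) :
    ∑ B ∈ U.powerset, (-1 : ℝ) ^ B.card = 0 := by
  have := Finset.sum_powerset_neg_one_pow_card (x := U)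
  rw [if_neg hU] at this
  have h2 : ((∑ B ∈ U.powerset, (-1 : ℤ) ^ B.card : ℤ) : ℝ) = 0 := by rw [this]; simp
  push_cast at h2
  convert h2 using 2

lemma powerset_erase (U : Finset ι) (a : ι) :
    (U.erase a).powerset = U.powerset.filter (fun B => a ∉ B) := by
  ext B; simp [Finset.subset_erase, and_comm]

lemma swap1 (U : Finset ι) (f : ι → Finset ι → ℝ) :
    ∑ a ∈ U, ∑ B ∈ (U.erase a).powerset, f a B
      = ∑ B ∈ U.powerset, ∑ a ∈ U \ B, f a B := by
  have h1 : ∀ a, ∑ B ∈ (U.erase a).powerset, f a B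
      = ∑ B ∈ U.powerset, if a ∉ B then f a B else 0 := by
    intro a; rw [powerset_erase, Finset.sum_filter]
  simp_rw [h1]
  rw [Finset.sum_comm]
  refine Finset.sum_congr rfl (fun B _ => ?_)
  rw [Finset.sdiff_eq_filter, Finset.sum_filter]

lemma swap2 (U : Finset ι) (f : ι → Finset ι → ℝ) :
    ∑ a ∈ U, ∑ B ∈ U.powerset.filter (fun B => a ∈ B), f a B
      = ∑ B ∈ U.powerset, ∑ a ∈ B, f a B := by
  simp_rw [Finset.sum_filter]
  rw [Finset.sum_comm]
  refine Finset.sum_congr rfl (fun B hB => ?_)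
  rw [Finset.mem_powerset] at hB
  rw [← Finset.sum_filter]
  congr 1
  ext a
  simp only [Finset.mem_filter]
  exact ⟨fun h => h.2, fun h => ⟨hB h, h⟩⟩

lemma insert_reindex (U : Finset ι) (a : ι) (ha : a ∈ U) (F : Finset ι → ℝ) :
    ∑ B ∈ (U.erase a).powerset, F (insert a B)
      = ∑ B ∈ U.powerset.filter (fun B => a ∈ B), F B := by
  refine Finset.sum_nbij' (fun B => insert a B) (fun B => B.erase a) ?_ ?_ ?_ ?_ ?_
  · intro B hB
    rw [Finset.mem_powerset] at hB
    rw [Finset.mem_filter, Finset.mem_powerset]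
    exact ⟨Finset.insert_subset ha (hB.trans (Finset.erase_subset _ _)), Finset.mem_insert_self _ _⟩
  · intro B hB
    rw [Finset.mem_filter, Finset.mem_powerset] at hB
    rw [Finset.mem_powerset]
    exact Finset.erase_subset_erase _ hB.1
  · intro B hB
    rw [Finset.mem_powerset] at hB
    have : a ∉ B := fun h => (Finset.mem_erase.mp (hB h)).1 rfl
    rw [Finset.erase_insert this]
  · intro B hB
    rw [Finset.mem_filter] at hB
    rw [Finset.insert_erase hB.2]
  · intro B hB; rfl

variable {w v : ι → ℝ} {c d : ℝ} {U : Finset ι}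

lemma wB_pos (hw : ∀ a ∈ U, 0 < w a) (hc : 0 < c) {B : Finset ι} (hB : B ⊆ U) :
    0 < c + ∑ a ∈ B, w a :=
  add_pos_of_pos_of_nonneg hc (Finset.sum_nonneg fun a haB => (hw a (hB haB)).le)

/-- recursion: (c + w_U) * AS c U = ∑_{a∈U} w a * AS c (U.erase a) -/
lemma AS_rec (hw : ∀ a ∈ U, 0 < w a) (hc : 0 < c) (hU : U.Nonempty) :
    (c + ∑ a ∈ U, w a) * AS w c U = ∑ a ∈ U, w a * AS w c (U.erase a) := by
  unfold AS
  simp_rw [Finset.mul_sum]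
  rw [swap1 U (fun a B => w a * ((-1:ℝ)^B.card / (c + ∑ x ∈ B, w x)))]
  rw [← sub_eq_zero, ← Finset.sum_sub_distrib]
  have key : ∀ B ∈ U.powerset,
      (c + ∑ a ∈ U, w a) * ((-1:ℝ)^B.card / (c + ∑ a ∈ B, w a))
        - ∑ a ∈ U \ B, w a * ((-1:ℝ)^B.card / (c + ∑ x ∈ B, w x))
      = (-1:ℝ)^B.card := by
    intro B hB
    rw [Finset.mem_powerset] at hB
    have hsd : ∑ a ∈ U \ B, w a = (∑ a ∈ U, w a) - ∑ a ∈ B, w a :=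
      Finset.sum_sdiff_eq_sub hB
    rw [← Finset.sum_mul, hsd]
    have hpos := wB_pos hw hc hB
    field_simp
    ring
  rw [Finset.sum_congr rfl key]
  exact sum_powerset_neg_one U (Finset.nonempty_iff_ne_empty.mp hU)

lemma AS_pos (hw : ∀ a ∈ U, 0 < w a) (hc : 0 < c) : 0 < AS w c U := by
  induction U using Finset.strongInduction with
  | _ U ih =>
    rcases U.eq_empty_or_nonempty with rfl | hU
    · unfold AS; simp [hc]
    · have hrec := AS_rec hw hc hU
      have hcU : 0 < c + ∑ a ∈ U, w a := wB_pos hw hc Finset.Subset.rfl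
      have hRHS : 0 < ∑ a ∈ U, w a * AS w c (U.erase a) := by
        refine Finset.sum_pos (fun a ha => ?_) hU
        exact mul_pos (hw a ha)
          (ih (U.erase a) (Finset.erase_ssubset ha)
            (fun b hb => hw b (Finset.erase_subset _ _ hb)))
      calc 0 < (∑ a ∈ U, w a * AS w c (U.erase a)) / (c + ∑ a ∈ U, w a) :=
              div_pos hRHS hcU
        _ = AS w c U := by rw [← hrec]; field_simp
  

lemma AS2_rec (hw : ∀ a ∈ U, 0 < w a) (hc : 0 < c) :
    (c + ∑ a ∈ U, w a) * AS2 w c U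
      = AS w c U + ∑ a ∈ U, w a * AS2 w c (U.erase a) := by
  unfold AS AS2
  simp_rw [Finset.mul_sum]
  rw [swap1 U (fun a B => w a * ((-1:ℝ)^B.card / (c + ∑ x ∈ B, w x) ^ 2))]
  rw [← sub_eq_zero]
  rw [← Finset.sum_add_distrib, ← Finset.sum_sub_distrib]
  rw [Finset.sum_eq_zero]
  intro B hB
  rw [Finset.mem_powerset] at hB
  have hsd : ∑ a ∈ U \ B, w a = (∑ a ∈ U, w a) - ∑ a ∈ B, w a :=
    Finset.sum_sdiff_eq_sub hB
  rw [← Finset.sum_mul, hsd]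
  have hpos := wB_pos hw hc hB
  field_simp
  ring

lemma AS2_pos (hw : ∀ a ∈ U, 0 < w a) (hc : 0 < c) : 0 < AS2 w c U := by
  induction U using Finset.strongInduction with
  | _ U ih =>
    have hcU : 0 < c + ∑ a ∈ U, w a := wB_pos hw hc Finset.Subset.rfl
    have hrec := AS2_rec hw hc
    have hRHS : 0 < AS w c U + ∑ a ∈ U, w a * AS2 w c (U.erase a) := by
      refine add_pos_of_pos_of_nonneg (AS_pos hw hc) (Finset.sum_nonneg fun a ha => ?_)
      exact le_of_lt (mul_pos (hw a ha)
        (ih (U.erase a) (Finset.erase_ssubset ha)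
          (fun b hb => hw b (Finset.erase_subset _ _ hb))))
    calc 0 < (AS w c U + ∑ a ∈ U, w a * AS2 w c (U.erase a)) / (c + ∑ a ∈ U, w a) :=
            div_pos hRHS hcU
      _ = AS2 w c U := by rw [← hrec]; field_simp

lemma ASD_rec (hw : ∀ a ∈ U, 0 < w a) (hv : ∀ a ∈ U, 0 < v a) (hc : 0 < c) (hd : 0 < d) :
    c * ASD w v c d U
      = AS v d U + ∑ a ∈ U, w a * ASD w v (c + w a) (d + v a) (U.erase a) := by
  have key : ∀ a ∈ U, ASD w v (c + w a) (d + v a) (U.erase a)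
      = ∑ B ∈ U.powerset.filter (fun B => a ∈ B),
          -((-1:ℝ)^B.card / ((c + ∑ x ∈ B, w x) * (d + ∑ x ∈ B, v x))) := by
    intro a ha
    rw [← insert_reindex U a ha]
    unfold ASD
    refine Finset.sum_congr rfl (fun B hB => ?_)
    rw [Finset.mem_powerset] at hB
    have haB : a ∉ B := fun h => (Finset.mem_erase.mp (hB h)).1 rfl
    rw [Finset.sum_insert haB, Finset.sum_insert haB, Finset.card_insert_of_notMem haB]
    rw [pow_succ]
    ring_nf
  rw [Finset.sum_congr rfl (fun a ha => by rw [key a ha])]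
  simp_rw [Finset.mul_sum]
  rw [swap2 U (fun a B => w a * -((-1:ℝ)^B.card / ((c + ∑ x ∈ B, w x) * (d + ∑ x ∈ B, v x))))]
  unfold ASD AS
  simp_rw [Finset.mul_sum]
  rw [← sub_eq_zero]
  rw [← Finset.sum_add_distrib, ← Finset.sum_sub_distrib]
  rw [Finset.sum_eq_zero]
  intro B hB
  rw [Finset.mem_powerset] at hB
  rw [← Finset.sum_mul]
  have hw' := wB_pos hw hc hB
  have hv' := wB_pos hv hd hB
  field_simp
  ring

lemma ASD_pos (hw : ∀ a ∈ U, 0 < w a) (hv : ∀ a ∈ U, 0 < v a) (hc : 0 < c) (hd : 0 < d) :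
    0 < ASD w v c d U := by
  induction U using Finset.strongInduction generalizing c d with
  | _ U ih =>
    have hrec := ASD_rec hw hv hc hd
    have hRHS : 0 < AS v d U + ∑ a ∈ U, w a * ASD w v (c + w a) (d + v a) (U.erase a) := by
      refine add_pos_of_pos_of_nonneg (AS_pos hv hd) (Finset.sum_nonneg fun a ha => ?_)
      refine le_of_lt (mul_pos (hw a ha) ?_)
      exact ih (U.erase a) (Finset.erase_ssubset ha)
        (fun b hb => hw b (Finset.erase_subset _ _ hb))
        (fun b hb => hv b (Finset.erase_subset _ _ hb))
        (add_pos hc (hw a ha)) (add_pos hd (hv a ha))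
    calc 0 < (AS v d U + ∑ a ∈ U, w a * ASD w v (c + w a) (d + v a) (U.erase a)) / c :=
            div_pos hRHS hc
      _ = ASD w v c d U := by rw [← hrec]; field_simp

/-- Step Eb: binomial-weighted alternating powerset sum as a double sum -/
lemma phi_decomp (T : Finset ι) (r : ℕ) (g : Finset ι → ℝ) :
    ∑ A ∈ T.powerset, (-1 : ℝ) ^ (A.card - r) * (A.card.choose r : ℝ) * g A
      = ∑ B ∈ T.powersetCard r, ∑ B' ∈ (T \ B).powerset,
          (-1 : ℝ) ^ B'.card * g (B ∪ B') := by
  have lhs_eq : ∀ A ∈ T.powerset,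
      (-1 : ℝ) ^ (A.card - r) * (A.card.choose r : ℝ) * g A
        = ∑ B ∈ A.powersetCard r, (-1 : ℝ) ^ (A.card - r) * g A := by
    intro A _
    rw [Finset.sum_const, Finset.card_powersetCard, nsmul_eq_mul]
    ring
  rw [Finset.sum_congr rfl lhs_eq]
  rw [Finset.sum_sigma', Finset.sum_sigma']
  refine Finset.sum_nbij' (fun x => ⟨x.2, x.1 \ x.2⟩) (fun x => ⟨x.1 ∪ x.2, x.1⟩) ?_ ?_ ?_ ?_ ?_
  · rintro ⟨A, B⟩ hx
    simp only [Finset.mem_sigma, Finset.mem_powerset, Finset.mem_powersetCard] at hx ⊢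
    exact ⟨⟨hx.2.1.trans hx.1, hx.2.2⟩, Finset.sdiff_subset_sdiff hx.1 Finset.Subset.rfl⟩
  · rintro ⟨B, B'⟩ hx
    simp only [Finset.mem_sigma, Finset.mem_powerset, Finset.mem_powersetCard] at hx ⊢
    exact ⟨Finset.union_subset hx.1.1 (hx.2.trans Finset.sdiff_subset),
      Finset.subset_union_left, hx.1.2⟩
  · rintro ⟨A, B⟩ hx
    simp only [Finset.mem_sigma, Finset.mem_powerset, Finset.mem_powersetCard] at hx
    have h : B ∪ A \ B = A := Finset.union_sdiff_of_subset hx.2.1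
    simp only [Sigma.mk.inj_iff]
    exact ⟨h, heq_of_eq_of_heq rfl HEq.rfl⟩
  · rintro ⟨B, B'⟩ hx
    simp only [Finset.mem_sigma, Finset.mem_powerset, Finset.mem_powersetCard] at hx
    have hdisj : Disjoint B B' := Finset.disjoint_of_subset_right hx.2 Finset.sdiff_disjoint.symm
    have h : (B ∪ B') \ B = B' := Finset.union_sdiff_cancel_left hdisj
    simp only [Sigma.mk.inj_iff]
    exact ⟨trivial, heq_of_eq h⟩
  · rintro ⟨A, B⟩ hx
    simp only [Finset.mem_sigma, Finset.mem_powerset, Finset.mem_powersetCard] at hx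
    have h1 : B ∪ A \ B = A := Finset.union_sdiff_of_subset hx.2.1
    have h2 : (A \ B).card = A.card - r := by
      rw [Finset.card_sdiff_of_subset hx.2.1, hx.2.2]
    show (-1 : ℝ) ^ (A.card - r) * g A = (-1 : ℝ) ^ (A \ B).card * g (B ∪ A \ B)
    rw [h1, h2]

omit [DecidableEq ι] in
/-- Step Ea: merging the m-sum over Icc into a powerset sum -/
lemma merge_m_sum (T : Finset ι) (L N' : ℕ) (hL2 : 2 ≤ L) (hLN : L ≤ N')
    (hT : T.card = N' - 2) (G : Finset ι → ℝ) :
    ∑ m ∈ Finset.Icc L N', (-1 : ℝ) ^ (m - L) * ((m - 2).choose (m - L) : ℝ) *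
        ∑ A ∈ T.powersetCard (m - 2), G A
      = ∑ A ∈ T.powerset,
          (-1 : ℝ) ^ (A.card - (L - 2)) * (A.card.choose (L - 2) : ℝ) * G A := by
  set r := L - 2 with hr
  have per_m : ∀ m ∈ Finset.Icc L N',
      (-1 : ℝ) ^ (m - L) * ((m - 2).choose (m - L) : ℝ) * ∑ A ∈ T.powersetCard (m - 2), G A
        = ∑ A ∈ T.powersetCard (m - 2),
            (-1 : ℝ) ^ (A.card - r) * (A.card.choose r : ℝ) * G A := by
    intro m hm
    rw [Finset.mem_Icc] at hm
    rw [Finset.mul_sum]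
    refine Finset.sum_congr rfl (fun A hA => ?_)
    have hAc : A.card = m - 2 := (Finset.mem_powersetCard.mp hA).2
    have e2 : (m - 2).choose (m - L) = A.card.choose r := by
      rw [hAc, show m - L = (m - 2) - r by omega]
      exact Nat.choose_symm (by omega)
    have e1 : m - L = A.card - r := by omega
    rw [e2, e1]
  rw [Finset.sum_congr rfl per_m]
  have reindex : ∑ m ∈ Finset.Icc L N', (∑ A ∈ T.powersetCard (m - 2),
        (-1 : ℝ) ^ (A.card - r) * (A.card.choose r : ℝ) * G A)
      = ∑ j ∈ Finset.Icc r (N' - 2), (∑ A ∈ T.powersetCard j,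
        (-1 : ℝ) ^ (A.card - r) * (A.card.choose r : ℝ) * G A) := by
    refine Finset.sum_nbij' (fun m => m - 2) (fun j => j + 2) ?_ ?_ ?_ ?_ ?_
    · intro m hm; simp only [Finset.mem_Icc] at hm ⊢; omega
    · intro j hj; simp only [Finset.mem_Icc] at hj ⊢; omega
    · intro m hm; simp only [Finset.mem_Icc] at hm; show m - 2 + 2 = m; omega
    · intro j hj; simp only [Finset.mem_Icc] at hj; show j + 2 - 2 = j; omega
    · intro m hm; rfl
  rw [reindex]
  rw [Finset.sum_powerset]
  have hrange : Finset.range (T.card + 1) = Finset.Icc 0 (N' - 2) := by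
    rw [hT, Finset.range_eq_Ico, Finset.Ico_add_one_right_eq_Icc]
  rw [hrange]
  refine Finset.sum_subset (fun j hj => ?_) (fun j hj hnj => ?_)
  · simp only [Finset.mem_Icc] at hj ⊢; omega
  · simp only [Finset.mem_Icc] at hj hnj
    refine Finset.sum_eq_zero (fun A hA => ?_)
    have hAc : A.card = j := (Finset.mem_powersetCard.mp hA).2
    have hz : A.card.choose r = 0 := Nat.choose_eq_zero_of_lt (by omega)
    rw [hz]
    simp

/-- reindex subsets of size m containing both i and j -/
lemma filter_pair_reindex (s : Finset ι) (i j : ι) (hij : i ≠ j) (hi : i ∈ s) (hj : j ∈ s)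
    (m : ℕ) (hm : 2 ≤ m) (G : Finset ι → ℝ) :
    ∑ R ∈ (s.powersetCard m).filter (fun R => i ∈ R ∧ j ∈ R), G R
      = ∑ A ∈ (s \ {i, j}).powersetCard (m - 2), G (insert i (insert j A)) := by
  refine (Finset.sum_nbij' (fun A => insert i (insert j A)) (fun R => (R.erase i).erase j)
    ?_ ?_ ?_ ?_ ?_).symm
  · intro A hA
    rw [Finset.mem_powersetCard] at hA
    obtain ⟨hAs, hAm⟩ := hA
    have hjA : j ∉ A := fun h => by
      have := hAs h; simp [Finset.mem_sdiff] at this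
    have hiA : i ∉ insert j A := by
      simp only [Finset.mem_insert]
      rintro (h | h)
      · exact hij h
      · have := hAs h; simp [Finset.mem_sdiff] at this
    simp only [Finset.mem_filter, Finset.mem_powersetCard]
    refine ⟨⟨?_, ?_⟩, Finset.mem_insert_self _ _,
      Finset.mem_insert_of_mem (Finset.mem_insert_self _ _)⟩
    · intro a ha
      simp only [Finset.mem_insert] at ha
      rcases ha with rfl | rfl | ha
      · exact hi
      · exact hj
      · exact (Finset.mem_sdiff.mp (hAs ha)).1
    · rw [Finset.card_insert_of_notMem hiA, Finset.card_insert_of_notMem hjA, hAm]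
      omega
  · intro R hR
    rw [Finset.mem_filter] at hR
    obtain ⟨hRP, hiR, hjR⟩ := hR
    rw [Finset.mem_powersetCard] at hRP
    obtain ⟨hRs, hRm⟩ := hRP
    rw [Finset.mem_powersetCard]
    constructor
    · intro a ha
      simp only [Finset.mem_erase] at ha
      simp only [Finset.mem_sdiff, Finset.mem_insert, Finset.mem_singleton]
      exact ⟨hRs ha.2.2, fun h => h.elim (fun h' => ha.2.1 h') (fun h' => ha.1 h')⟩
    · rw [Finset.card_erase_of_mem (Finset.mem_erase.mpr ⟨Ne.symm hij, hjR⟩),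
        Finset.card_erase_of_mem hiR, hRm]
      omega
  · intro A hA
    rw [Finset.mem_powersetCard] at hA
    obtain ⟨hAs, hAm⟩ := hA
    have hjA : j ∉ A := fun h => by
      have := hAs h; simp [Finset.mem_sdiff] at this
    have hiA : i ∉ insert j A := by
      simp only [Finset.mem_insert]
      rintro (h | h)
      · exact hij h
      · have := hAs h; simp [Finset.mem_sdiff] at this
    show ((insert i (insert j A)).erase i).erase j = A
    rw [Finset.erase_insert hiA, Finset.erase_insert hjA]
  · intro R hR
    rw [Finset.mem_filter] at hR
    obtain ⟨_, hiR, hjR⟩ := hR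
    show insert i (insert j ((R.erase i).erase j)) = R
    rw [Finset.insert_erase (Finset.mem_erase.mpr ⟨Ne.symm hij, hjR⟩), Finset.insert_erase hiR]
  · intro A hA; rfl

lemma K_pos (N C : ℕ) (hN : 2 ≤ N) (hC1 : 1 ≤ C) (hCN : C < N)
    (P : Fin N → ℝ) (hP : ∀ k, 0 < P k) (i j : Fin N) (hij : i ≠ j) :
    0 < ∑ m ∈ Finset.Icc (N - C + 1) N,
      (-1:ℝ)^(m - (N - C + 1)) * ((m-2).choose (m - (N - C + 1)) : ℝ) *
      ∑ R ∈ ((univ : Finset (Fin N)).powersetCard m).filter (fun R => i ∈ R ∧ j ∈ R),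
        ((N:ℝ) / (R.card * ∑ a ∈ R, P a) + 1 / (∑ a ∈ R, P a)^2) := by
  set L := N - C + 1 with hL
  have hL2 : 2 ≤ L := by omega
  have hLN : L ≤ N := by omega
  set T := (univ : Finset (Fin N)) \ {i, j} with hTdef
  have hcard2 : ({i, j} : Finset (Fin N)).card = 2 := by
    rw [Finset.card_insert_of_notMem (by simp [hij]), Finset.card_singleton]
  have hT : T.card = N - 2 := by
    rw [hTdef, Finset.card_sdiff_of_subset (Finset.subset_univ _), hcard2, Finset.card_univ,
      Fintype.card_fin]
  set c := P i + P j with hc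
  have hcpos : 0 < c := add_pos (hP i) (hP j)
  set gfun : Finset (Fin N) → ℝ := fun A =>
    (N:ℝ) / (((A.card:ℝ) + 2) * (c + ∑ a ∈ A, P a)) + 1 / (c + ∑ a ∈ A, P a)^2 with hgfun
  -- step 1
  have step1 : ∀ m ∈ Finset.Icc L N,
      ∑ R ∈ ((univ : Finset (Fin N)).powersetCard m).filter (fun R => i ∈ R ∧ j ∈ R),
        ((N:ℝ) / (R.card * ∑ a ∈ R, P a) + 1 / (∑ a ∈ R, P a)^2)
      = ∑ A ∈ T.powersetCard (m - 2), gfun A := by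
    intro m hm
    rw [Finset.mem_Icc] at hm
    rw [filter_pair_reindex univ i j hij (Finset.mem_univ i) (Finset.mem_univ j) m (by omega)]
    refine Finset.sum_congr rfl (fun A hA => ?_)
    rw [Finset.mem_powersetCard] at hA
    obtain ⟨hAT, _⟩ := hA
    have hjA : j ∉ A := fun h => by
      have := hAT h; rw [hTdef] at this; simp [Finset.mem_sdiff] at this
    have hiA : i ∉ insert j A := by
      simp only [Finset.mem_insert]
      rintro (h | h)
      · exact hij h
      · have := hAT h; rw [hTdef] at this; simp [Finset.mem_sdiff] at this
    rw [Finset.sum_insert hiA, Finset.sum_insert hjA,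
      Finset.card_insert_of_notMem hiA, Finset.card_insert_of_notMem hjA]
    have e1 : P i + (P j + ∑ a ∈ A, P a) = c + ∑ a ∈ A, P a := by rw [hc]; ring
    have e2 : ((A.card + 1 + 1 : ℕ) : ℝ) = (A.card : ℝ) + 2 := by push_cast; ring
    rw [e1, e2, hgfun]
  rw [Finset.sum_congr rfl (fun m hm => by rw [step1 m hm])]
  rw [merge_m_sum T L N hL2 hLN hT gfun]
  rw [phi_decomp T (L - 2) gfun]
  -- step 4: rewrite each inner sum
  have step4 : ∀ B ∈ T.powersetCard (L - 2),
      ∑ B' ∈ (T \ B).powerset, (-1 : ℝ) ^ B'.card * gfun (B ∪ B')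
        = (N:ℝ) * ASD P (fun _ => 1) (c + ∑ a ∈ B, P a) (((L:ℝ) - 2) + 2) (T \ B)
          + AS2 P (c + ∑ a ∈ B, P a) (T \ B) := by
    intro B hB
    rw [Finset.mem_powersetCard] at hB
    obtain ⟨hBT, hBr⟩ := hB
    unfold ASD AS2
    rw [Finset.mul_sum, ← Finset.sum_add_distrib]
    refine Finset.sum_congr rfl (fun B' hB' => ?_)
    rw [Finset.mem_powerset] at hB'
    have hdisj : Disjoint B B' := Finset.disjoint_of_subset_right hB' Finset.sdiff_disjoint.symm
    have hsum : ∑ a ∈ B ∪ B', P a = ∑ a ∈ B, P a + ∑ a ∈ B', P a := Finset.sum_union hdisj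
    have hcardu : (B ∪ B').card = (L - 2) + B'.card := by
      rw [Finset.card_union_of_disjoint hdisj, hBr]
    have hones : ∑ _a ∈ B', (1:ℝ) = (B'.card : ℝ) := by
      rw [Finset.sum_const, nsmul_eq_mul, mul_one]
    rw [hgfun]
    simp only [hsum, hcardu, hones]
    have ecast : (((L - 2) + B'.card : ℕ) : ℝ) = ((L:ℝ) - 2) + (B'.card : ℝ) := by
      have : (2:ℕ) ≤ L := hL2
      push_cast [this]
      ring
    rw [ecast]
    have hXpos : (0:ℝ) < c + ∑ a ∈ B, P a + ∑ a ∈ B', P a := by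
      have h1 : (0:ℝ) ≤ ∑ a ∈ B, P a := Finset.sum_nonneg fun a ha => (hP a).le
      have h2 : (0:ℝ) ≤ ∑ a ∈ B', P a := Finset.sum_nonneg fun a ha => (hP a).le
      linarith
    have e3 : c + (∑ a ∈ B, P a + ∑ a ∈ B', P a) = c + ∑ a ∈ B, P a + ∑ a ∈ B', P a := by ring
    rw [e3]
    ring
  rw [Finset.sum_congr rfl step4]
  -- step 5: positivity
  have hne : (T.powersetCard (L - 2)).Nonempty := by
    rw [Finset.powersetCard_nonempty, hT]
    omega
  refine Finset.sum_pos (fun B hB => ?_) hne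
  rw [Finset.mem_powersetCard] at hB
  have hcB : 0 < c + ∑ a ∈ B, P a :=
    add_pos_of_pos_of_nonneg hcpos (Finset.sum_nonneg fun a _ => (hP a).le)
  have hd : (0:ℝ) < ((L:ℝ) - 2) + 2 := by
    have : (2:ℕ) ≤ L := hL2
    have : (2:ℝ) ≤ (L:ℝ) := by exact_mod_cast this
    linarith
  refine add_pos (mul_pos (by positivity) ?_) (AS2_pos (fun a _ => hP a) hcB)
  exact ASD_pos (fun a _ => hP a) (fun a _ => one_pos) hcB hd

/-- reindex subsets of size m containing i -/
lemma filter_mem_reindex (s : Finset ι) (i : ι) (hi : i ∈ s) (m : ℕ) (hm : 1 ≤ m)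
    (G : Finset ι → ℝ) :
    ∑ R ∈ (s.powersetCard m).filter (fun R => i ∈ R), G R
      = ∑ A ∈ (s.erase i).powersetCard (m - 1), G (insert i A) := by
  refine (Finset.sum_nbij' (fun A => insert i A) (fun R => R.erase i) ?_ ?_ ?_ ?_ ?_).symm
  · intro A hA
    rw [Finset.mem_powersetCard] at hA
    obtain ⟨hAs, hAm⟩ := hA
    have hiA : i ∉ A := fun h => (Finset.mem_erase.mp (hAs h)).1 rfl
    rw [Finset.mem_filter, Finset.mem_powersetCard]
    refine ⟨⟨Finset.insert_subset hi (hAs.trans (Finset.erase_subset _ _)), ?_⟩,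
      Finset.mem_insert_self _ _⟩
    rw [Finset.card_insert_of_notMem hiA, hAm]
    omega
  · intro R hR
    rw [Finset.mem_filter, Finset.mem_powersetCard] at hR
    rw [Finset.mem_powersetCard]
    exact ⟨Finset.erase_subset_erase _ hR.1.1,
      by rw [Finset.card_erase_of_mem hR.2, hR.1.2]⟩
  · intro A hA
    rw [Finset.mem_powersetCard] at hA
    have hiA : i ∉ A := fun h => (Finset.mem_erase.mp (hA.1 h)).1 rfl
    show (insert i A).erase i = A
    rw [Finset.erase_insert hiA]
  · intro R hR
    rw [Finset.mem_filter] at hR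
    show insert i (R.erase i) = R
    rw [Finset.insert_erase hR.2]
  · intro A hA; rfl

/-- counting: each element lies in `C(N-1, m-1)` of the m-subsets -/
lemma count_sum {N : ℕ} (m : ℕ) (hm : 1 ≤ m) (f : Fin N → ℝ) :
    ∑ R ∈ (univ : Finset (Fin N)).powersetCard m, ∑ a ∈ R, f a
      = ((N - 1).choose (m - 1) : ℝ) * ∑ a, f a := by
  have per_R : ∀ R ∈ (univ : Finset (Fin N)).powersetCard m,
      ∑ a ∈ R, f a = ∑ a ∈ univ, if a ∈ R then f a else 0 := by
    intro R hR
    rw [Finset.sum_ite_mem, Finset.univ_inter]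
  rw [Finset.sum_congr rfl per_R, Finset.sum_comm]
  have per_a : ∀ a ∈ (univ : Finset (Fin N)),
      ∑ R ∈ (univ : Finset (Fin N)).powersetCard m, (if a ∈ R then f a else 0)
        = ((N - 1).choose (m - 1) : ℝ) * f a := by
    intro a _
    rw [← Finset.sum_filter]
    rw [filter_mem_reindex univ a (Finset.mem_univ a) m hm (fun _ => f a)]
    rw [Finset.sum_const, Finset.card_powersetCard, nsmul_eq_mul]
    congr 2
    · rw [Finset.card_erase_of_mem (Finset.mem_univ a), Finset.card_univ, Fintype.card_fin]
  rw [Finset.sum_congr rfl per_a, ← Finset.mul_sum]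

/-- the square-difference expansion -/
lemma sq_sum (R : Finset ι) (f : ι → ℝ) :
    ∑ a ∈ R, ∑ b ∈ R, (f a - f b)^2
      = 2 * ((R.card : ℝ) * (∑ a ∈ R, f a ^ 2) - (∑ a ∈ R, f a)^2) := by
  have per_a : ∀ a ∈ R, ∑ b ∈ R, (f a - f b)^2
      = (R.card : ℝ) * f a ^ 2 - 2 * f a * (∑ b ∈ R, f b) + ∑ b ∈ R, f b ^ 2 := by
    intro a _
    have expand : ∀ b ∈ R, (f a - f b)^2 = f a ^ 2 - 2 * f a * f b + f b ^ 2 := by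
      intro b _; ring
    rw [Finset.sum_congr rfl expand]
    rw [Finset.sum_add_distrib, Finset.sum_sub_distrib, Finset.sum_const, nsmul_eq_mul,
      ← Finset.mul_sum]
  rw [Finset.sum_congr rfl per_a]
  rw [Finset.sum_add_distrib, Finset.sum_sub_distrib, ← Finset.mul_sum]
  have e1 : ∑ x ∈ R, 2 * f x * (∑ b ∈ R, f b)
      = 2 * (∑ b ∈ R, f b) * (∑ b ∈ R, f b) := by
    rw [← Finset.sum_mul, ← Finset.mul_sum]
  have e2 : ∑ _x ∈ R, (∑ b ∈ R, f b ^ 2) = (R.card : ℝ) * (∑ b ∈ R, f b ^ 2) := by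
    rw [Finset.sum_const, nsmul_eq_mul]
  rw [e1, e2]
  ring

/-- triple swap -/
lemma triple_swap {N : ℕ} (S : Finset (Finset (Fin N))) (h : Fin N → Fin N → Finset (Fin N) → ℝ) :
    ∑ R ∈ S, ∑ a ∈ R, ∑ b ∈ R, h a b R
      = ∑ a ∈ (univ : Finset (Fin N)), ∑ b ∈ univ,
          ∑ R ∈ S.filter (fun R => a ∈ R ∧ b ∈ R), h a b R := by
  have per_R : ∀ R ∈ S, ∑ a ∈ R, ∑ b ∈ R, h a b R
      = ∑ a ∈ (univ : Finset (Fin N)), ∑ b ∈ univ,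
          if a ∈ R ∧ b ∈ R then h a b R else 0 := by
    intro R _
    have inner : ∀ a ∈ (univ : Finset (Fin N)),
        (∑ b ∈ univ, if a ∈ R ∧ b ∈ R then h a b R else 0)
          = if a ∈ R then ∑ b ∈ R, h a b R else 0 := by
      intro a _
      by_cases ha : a ∈ R
      · simp only [ha, true_and, if_true]
        rw [Finset.sum_ite_mem, Finset.univ_inter]
      · simp [ha]
    rw [Finset.sum_congr rfl inner, Finset.sum_ite_mem, Finset.univ_inter]
  rw [Finset.sum_congr rfl per_R]
  rw [Finset.sum_comm]
  refine Finset.sum_congr rfl (fun a _ => ?_)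
  rw [Finset.sum_comm]
  refine Finset.sum_congr rfl (fun b _ => ?_)
  rw [← Finset.sum_filter]

/-- main positivity: the scaled radial derivative is positive at a nonuniform positive p -/
theorem main_pos (N C : ℕ) (hN : 2 ≤ N) (hC1 : 1 ≤ C) (hCN : C < N)
    (P : Fin N → ℝ) (hP : ∀ k, 0 < P k) (hPsum : ∑ k, P k = 1)
    (i0 j0 : Fin N) (hne : P i0 ≠ P j0) :
    0 < ∑ m ∈ Finset.Icc (N - C + 1) N,
      (-1:ℝ)^(m - (N - C + 1)) * ((m-2).choose (m - (N - C + 1)) : ℝ) *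
      ∑ R ∈ (univ : Finset (Fin N)).powersetCard m,
        ((N:ℝ) * (∑ a ∈ R, P a ^ 2) / (∑ a ∈ R, P a)
          + (R.card : ℝ) * (∑ a ∈ R, P a ^ 2) / (∑ a ∈ R, P a)^2 - 2) := by
  set L := N - C + 1 with hL
  -- per (m, R) decomposition
  have per_R : ∀ m ∈ Finset.Icc L N, ∀ R ∈ (univ : Finset (Fin N)).powersetCard m,
      (N:ℝ) * (∑ a ∈ R, P a ^ 2) / (∑ a ∈ R, P a)
          + (R.card : ℝ) * (∑ a ∈ R, P a ^ 2) / (∑ a ∈ R, P a)^2 - 2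
        = (∑ a ∈ R, ∑ b ∈ R, (P a - P b)^2 *
            ((N:ℝ) / (R.card * ∑ x ∈ R, P x) + 1 / (∑ x ∈ R, P x)^2) / 2)
          + ((N:ℝ) * (∑ a ∈ R, P a) / R.card - 1) := by
    intro m hm R hR
    rw [Finset.mem_Icc] at hm
    rw [Finset.mem_powersetCard] at hR
    have hm2 : 2 ≤ m := by omega
    have hcard : R.card = m := hR.2
    have hRne : R.Nonempty := Finset.card_pos.mp (by omega)
    have hp : 0 < ∑ x ∈ R, P x := Finset.sum_pos (fun x _ => hP x) hRne
    have hmR : (0:ℝ) < (R.card : ℝ) := by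
      have : 0 < R.card := by omega
      exact_mod_cast this
    -- pull the constant factor out of the double sum
    have pull : ∑ a ∈ R, ∑ b ∈ R, (P a - P b)^2 *
            ((N:ℝ) / (R.card * ∑ x ∈ R, P x) + 1 / (∑ x ∈ R, P x)^2) / 2
        = (∑ a ∈ R, ∑ b ∈ R, (P a - P b)^2) *
            ((N:ℝ) / (R.card * ∑ x ∈ R, P x) + 1 / (∑ x ∈ R, P x)^2) / 2 := by
      have inner : ∀ a ∈ R, ∑ b ∈ R, (P a - P b)^2 *
            ((N:ℝ) / (R.card * ∑ x ∈ R, P x) + 1 / (∑ x ∈ R, P x)^2) / 2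
          = (∑ b ∈ R, (P a - P b)^2) *
            ((N:ℝ) / (R.card * ∑ x ∈ R, P x) + 1 / (∑ x ∈ R, P x)^2) / 2 := by
        intro a _
        rw [← Finset.sum_div, ← Finset.sum_mul]
      rw [Finset.sum_congr rfl inner, ← Finset.sum_div, ← Finset.sum_mul]
    rw [pull, sq_sum R P]
    have hpne : (∑ x ∈ R, P x) ≠ 0 := ne_of_gt hp
    have hmne : (R.card : ℝ) ≠ 0 := ne_of_gt hmR
    field_simp
    ring
  -- rewrite the sum
  have split : ∀ m ∈ Finset.Icc L N,
      (-1:ℝ)^(m - L) * ((m-2).choose (m - L) : ℝ) *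
      ∑ R ∈ (univ : Finset (Fin N)).powersetCard m,
        ((N:ℝ) * (∑ a ∈ R, P a ^ 2) / (∑ a ∈ R, P a)
          + (R.card : ℝ) * (∑ a ∈ R, P a ^ 2) / (∑ a ∈ R, P a)^2 - 2)
      = (-1:ℝ)^(m - L) * ((m-2).choose (m - L) : ℝ) *
          (∑ R ∈ (univ : Finset (Fin N)).powersetCard m,
            ∑ a ∈ R, ∑ b ∈ R, (P a - P b)^2 *
              ((N:ℝ) / (R.card * ∑ x ∈ R, P x) + 1 / (∑ x ∈ R, P x)^2) / 2)
        + (-1:ℝ)^(m - L) * ((m-2).choose (m - L) : ℝ) *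
          (∑ R ∈ (univ : Finset (Fin N)).powersetCard m,
            ((N:ℝ) * (∑ a ∈ R, P a) / R.card - 1)) := by
    intro m hm
    rw [Finset.sum_congr rfl (per_R m hm), Finset.sum_add_distrib]
    ring
  rw [Finset.sum_congr rfl split, Finset.sum_add_distrib]
  -- second part vanishes
  have second_zero : ∑ m ∈ Finset.Icc L N,
      (-1:ℝ)^(m - L) * ((m-2).choose (m - L) : ℝ) *
        (∑ R ∈ (univ : Finset (Fin N)).powersetCard m,
          ((N:ℝ) * (∑ a ∈ R, P a) / R.card - 1)) = 0 := by
    refine Finset.sum_eq_zero (fun m hm => ?_)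
    rw [Finset.mem_Icc] at hm
    have hm1 : 1 ≤ m := by omega
    have inner_zero : ∑ R ∈ (univ : Finset (Fin N)).powersetCard m,
        ((N:ℝ) * (∑ a ∈ R, P a) / R.card - 1) = 0 := by
      have per : ∀ R ∈ (univ : Finset (Fin N)).powersetCard m,
          (N:ℝ) * (∑ a ∈ R, P a) / R.card - 1
            = ((N:ℝ)/m) * (∑ a ∈ R, P a) - 1 := by
        intro R hR
        rw [Finset.mem_powersetCard] at hR
        rw [hR.2]
        ring
      rw [Finset.sum_congr rfl per, Finset.sum_sub_distrib, ← Finset.mul_sum]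
      rw [count_sum m hm1 P, hPsum, mul_one]
      rw [Finset.sum_const, Finset.card_powersetCard, Finset.card_univ, Fintype.card_fin,
        nsmul_eq_mul, mul_one]
      -- (N/m) * C(N-1, m-1) - C(N, m) = 0
      have key : N * (N-1).choose (m-1) = N.choose m * m := by
        have h1 := Nat.add_one_mul_choose_eq (N-1) (m-1)
        have e1 : N - 1 + 1 = N := by omega
        have e2 : m - 1 + 1 = m := by omega
        rw [e1, e2] at h1
        exact h1
      have keyR : (N:ℝ) * ((N-1).choose (m-1) : ℝ) = (N.choose m : ℝ) * m := by
        exact_mod_cast key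
      have hmne : (m:ℝ) ≠ 0 := by
        have : 0 < m := by omega
        exact_mod_cast ne_of_gt this
      field_simp
      linarith [keyR]
    rw [inner_zero, mul_zero]
  rw [second_zero, add_zero]
  -- swap sums
  have swap : ∀ m ∈ Finset.Icc L N,
      (-1:ℝ)^(m - L) * ((m-2).choose (m - L) : ℝ) *
        (∑ R ∈ (univ : Finset (Fin N)).powersetCard m,
          ∑ a ∈ R, ∑ b ∈ R, (P a - P b)^2 *
            ((N:ℝ) / (R.card * ∑ x ∈ R, P x) + 1 / (∑ x ∈ R, P x)^2) / 2)
      = ∑ a ∈ (univ : Finset (Fin N)), ∑ b ∈ univ,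
          (-1:ℝ)^(m - L) * ((m-2).choose (m - L) : ℝ) *
          ∑ R ∈ ((univ : Finset (Fin N)).powersetCard m).filter (fun R => a ∈ R ∧ b ∈ R),
            (P a - P b)^2 *
              ((N:ℝ) / (R.card * ∑ x ∈ R, P x) + 1 / (∑ x ∈ R, P x)^2) / 2 := by
    intro m _
    rw [triple_swap ((univ : Finset (Fin N)).powersetCard m)
      (fun a b R => (P a - P b)^2 *
        ((N:ℝ) / (R.card * ∑ x ∈ R, P x) + 1 / (∑ x ∈ R, P x)^2) / 2)]
    rw [Finset.mul_sum]
    refine Finset.sum_congr rfl (fun a _ => ?_)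
    rw [Finset.mul_sum]
  rw [Finset.sum_congr rfl swap]
  rw [Finset.sum_comm]
  -- now: ∑ a ∑ m ∑ b → ∑ a ∑ b ∑ m
  have swap2 : ∀ a ∈ (univ : Finset (Fin N)),
      ∑ m ∈ Finset.Icc L N, ∑ b ∈ univ,
        (-1:ℝ)^(m - L) * ((m-2).choose (m - L) : ℝ) *
          ∑ R ∈ ((univ : Finset (Fin N)).powersetCard m).filter (fun R => a ∈ R ∧ b ∈ R),
            (P a - P b)^2 *
              ((N:ℝ) / (R.card * ∑ x ∈ R, P x) + 1 / (∑ x ∈ R, P x)^2) / 2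
      = ∑ b ∈ univ, (P a - P b)^2 / 2 *
          ∑ m ∈ Finset.Icc L N,
            (-1:ℝ)^(m - L) * ((m-2).choose (m - L) : ℝ) *
            ∑ R ∈ ((univ : Finset (Fin N)).powersetCard m).filter (fun R => a ∈ R ∧ b ∈ R),
              ((N:ℝ) / (R.card * ∑ x ∈ R, P x) + 1 / (∑ x ∈ R, P x)^2) := by
    intro a _
    rw [Finset.sum_comm]
    refine Finset.sum_congr rfl (fun b _ => ?_)
    rw [Finset.mul_sum]
    refine Finset.sum_congr rfl (fun m _ => ?_)
    rw [Finset.mul_sum, Finset.mul_sum, Finset.mul_sum]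
    refine Finset.sum_congr rfl (fun R _ => ?_)
    ring
  rw [Finset.sum_congr rfl swap2]
  -- final positivity
  have hij0 : i0 ≠ j0 := fun h => hne (by rw [h])
  have nonneg : ∀ a b : Fin N, 0 ≤ (P a - P b)^2 / 2 *
      ∑ m ∈ Finset.Icc L N,
        (-1:ℝ)^(m - L) * ((m-2).choose (m - L) : ℝ) *
        ∑ R ∈ ((univ : Finset (Fin N)).powersetCard m).filter (fun R => a ∈ R ∧ b ∈ R),
          ((N:ℝ) / (R.card * ∑ x ∈ R, P x) + 1 / (∑ x ∈ R, P x)^2) := by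
    intro a b
    by_cases hab : a = b
    · subst hab; simp
    · exact mul_nonneg (by positivity) (le_of_lt (K_pos N C hN hC1 hCN P hP a b hab))
  refine Finset.sum_pos' (fun a _ => Finset.sum_nonneg (fun b _ => nonneg a b))
    ⟨i0, Finset.mem_univ i0, ?_⟩
  refine Finset.sum_pos' (fun b _ => nonneg i0 b) ⟨j0, Finset.mem_univ j0, ?_⟩
  have hsub : P i0 - P j0 ≠ 0 := sub_ne_zero.mpr hne
  exact mul_pos (by positivity) (K_pos N C hN hC1 hCN P hP i0 j0 hij0)

noncomputable def Ederiv (N C : ℕ) (q : Fin N → ℝ) (θ : ℝ) : ℝ :=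
  ∑ m ∈ Finset.Icc (N - C + 1) N,
    (-1 : ℝ) ^ (m - (N - C + 1)) * ((m - 2).choose (m - (N - C + 1)) : ℝ) *
      ∑ R ∈ (univ : Finset (Fin N)).powersetCard m,
        ((∑ i ∈ R, 2 * ((N:ℝ)⁻¹ + θ * (q i - (N:ℝ)⁻¹)) * (q i - (N:ℝ)⁻¹)) *
            (∑ i ∈ R, ((N:ℝ)⁻¹ + θ * (q i - (N:ℝ)⁻¹)))
          - (∑ i ∈ R, ((N:ℝ)⁻¹ + θ * (q i - (N:ℝ)⁻¹)) ^ 2) *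
            (∑ i ∈ R, (q i - (N:ℝ)⁻¹)))
        / (∑ i ∈ R, ((N:ℝ)⁻¹ + θ * (q i - (N:ℝ)⁻¹))) ^ 2



lemma hasDeriv_hitRate (N C : ℕ) (q : Fin N → ℝ) (θ : ℝ)
    (hden : ∀ m ∈ Finset.Icc (N - C + 1) N, ∀ R ∈ (univ : Finset (Fin N)).powersetCard m,
      (∑ i ∈ R, ((N:ℝ)⁻¹ + θ * (q i - (N:ℝ)⁻¹))) ≠ 0) :
    HasDerivAt (fun t => hitRate N C (fun i => (N:ℝ)⁻¹ + t * (q i - (N:ℝ)⁻¹)))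
      (Ederiv N C q θ) θ := by
  unfold hitRate Ederiv
  refine HasDerivAt.fun_sum (fun m hm => ?_)
  refine HasDerivAt.const_mul _ ?_
  refine HasDerivAt.fun_sum (fun R hR => ?_)
  have haff : ∀ i : Fin N, HasDerivAt (fun t : ℝ => (N:ℝ)⁻¹ + t * (q i - (N:ℝ)⁻¹))
      (q i - (N:ℝ)⁻¹) θ := by
    intro i
    simpa using ((hasDerivAt_id θ).mul_const (q i - (N:ℝ)⁻¹)).const_add ((N:ℝ)⁻¹)
  have hnum : HasDerivAt (fun t => ∑ i ∈ R, ((N:ℝ)⁻¹ + t * (q i - (N:ℝ)⁻¹)) ^ 2)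
      (∑ i ∈ R, 2 * ((N:ℝ)⁻¹ + θ * (q i - (N:ℝ)⁻¹)) * (q i - (N:ℝ)⁻¹)) θ := by
    refine HasDerivAt.fun_sum (fun i _ => ?_)
    simpa using (haff i).fun_pow 2
  have hd : HasDerivAt (fun t => ∑ i ∈ R, ((N:ℝ)⁻¹ + t * (q i - (N:ℝ)⁻¹)))
      (∑ i ∈ R, (q i - (N:ℝ)⁻¹)) θ :=
    HasDerivAt.fun_sum (fun i _ => haff i)
  exact hnum.div hd (hden m hm R hR)

variable {N C : ℕ} {q : Fin N → ℝ}

lemma P_pos (hN : 2 ≤ N) (hqpos : ∀ i, 0 < q i) {θ : ℝ} (hθ0 : 0 < θ) (hθ1 : θ ≤ 1) (i : Fin N) :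
    0 < (N:ℝ)⁻¹ + θ * (q i - (N:ℝ)⁻¹) := by
  have hN0 : (0:ℝ) < (N:ℝ) := by positivity
  have e : (N:ℝ)⁻¹ + θ * (q i - (N:ℝ)⁻¹) = (1 - θ) * (N:ℝ)⁻¹ + θ * q i := by ring
  rw [e]
  have h1 : 0 ≤ (1 - θ) * (N:ℝ)⁻¹ := mul_nonneg (by linarith) (by positivity)
  have h2 : 0 < θ * q i := mul_pos hθ0 (hqpos i)
  linarith

lemma P_sum (hN : 2 ≤ N) (hqsum : ∑ i, q i = 1) (θ : ℝ) :
    ∑ i, ((N:ℝ)⁻¹ + θ * (q i - (N:ℝ)⁻¹)) = 1 := by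
  have hN0 : (N:ℝ) ≠ 0 := by positivity
  rw [Finset.sum_add_distrib, Finset.sum_const, Finset.card_univ, Fintype.card_fin,
    nsmul_eq_mul, ← Finset.mul_sum, Finset.sum_sub_distrib, hqsum, Finset.sum_const,
    Finset.card_univ, Fintype.card_fin, nsmul_eq_mul]
  field_simp
  ring

lemma exists_ne (hN : 2 ≤ N) (hqsum : ∑ i, q i = 1) (hqu : q ≠ fun _ => (N : ℝ)⁻¹) :
    ∃ i0 j0 : Fin N, q i0 ≠ q j0 := by
  by_contra hcon
  push_neg at hcon
  apply hqu
  have h0 : (0 : ℕ) < N := by omega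
  set i0 : Fin N := ⟨0, h0⟩
  have hall : ∀ i, q i = q i0 := fun i => hcon i i0
  have : ∑ i, q i = N * q i0 := by
    rw [Finset.sum_congr rfl (fun i _ => hall i), Finset.sum_const, Finset.card_univ,
      Fintype.card_fin, nsmul_eq_mul]
  rw [hqsum] at this
  have hN0 : (N:ℝ) ≠ 0 := by positivity
  funext i
  rw [hall i]
  field_simp
  linarith [this]

lemma Ederiv_eq (hN : 2 ≤ N) (hC1 : 1 ≤ C) (hCN : C < N) (hqpos : ∀ i, 0 < q i)
    {θ : ℝ} (hθ0 : 0 < θ) (hθ1 : θ ≤ 1) :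
    (N:ℝ) * θ * Ederiv N C q θ
      = ∑ m ∈ Finset.Icc (N - C + 1) N,
          (-1:ℝ)^(m - (N - C + 1)) * ((m-2).choose (m - (N - C + 1)) : ℝ) *
          ∑ R ∈ (univ : Finset (Fin N)).powersetCard m,
            ((N:ℝ) * (∑ a ∈ R, ((N:ℝ)⁻¹ + θ * (q a - (N:ℝ)⁻¹)) ^ 2)
                / (∑ a ∈ R, ((N:ℝ)⁻¹ + θ * (q a - (N:ℝ)⁻¹)))
              + (R.card : ℝ) * (∑ a ∈ R, ((N:ℝ)⁻¹ + θ * (q a - (N:ℝ)⁻¹)) ^ 2)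
                / (∑ a ∈ R, ((N:ℝ)⁻¹ + θ * (q a - (N:ℝ)⁻¹)))^2 - 2) := by
  unfold Ederiv
  rw [Finset.mul_sum]
  refine Finset.sum_congr rfl (fun m hm => ?_)
  rw [show ∀ x y : ℝ, (N:ℝ) * θ * (x * y) = x * ((N:ℝ) * θ * y) from fun x y => by ring]
  congr 1
  rw [Finset.mul_sum]
  refine Finset.sum_congr rfl (fun R hR => ?_)
  rw [Finset.mem_Icc] at hm
  rw [Finset.mem_powersetCard] at hR
  have hRne : R.Nonempty := Finset.card_pos.mp (by omega)
  set aN : ℝ := (N:ℝ)⁻¹ with haN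
  have hN0 : (N:ℝ) ≠ 0 := by positivity
  have hp : 0 < ∑ i ∈ R, (aN + θ * (q i - aN)) :=
    Finset.sum_pos (fun i _ => P_pos hN hqpos hθ0 hθ1 i) hRne
  have hn2 : θ * (∑ i ∈ R, 2 * (aN + θ * (q i - aN)) * (q i - aN))
      = 2 * (∑ i ∈ R, (aN + θ * (q i - aN))^2) - 2 * aN * (∑ i ∈ R, (aN + θ * (q i - aN))) := by
    rw [Finset.mul_sum]
    rw [show (2:ℝ) * (∑ i ∈ R, (aN + θ * (q i - aN))^2)
        - 2 * aN * (∑ i ∈ R, (aN + θ * (q i - aN)))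
      = ∑ i ∈ R, (2 * (aN + θ * (q i - aN))^2 - 2 * aN * (aN + θ * (q i - aN))) from by
        rw [Finset.sum_sub_distrib, ← Finset.mul_sum, ← Finset.mul_sum]]
    refine Finset.sum_congr rfl (fun i _ => ?_)
    ring
  have hdd : θ * (∑ i ∈ R, (q i - aN))
      = (∑ i ∈ R, (aN + θ * (q i - aN))) - R.card * aN := by
    rw [Finset.mul_sum]
    rw [show (∑ i ∈ R, (aN + θ * (q i - aN))) - (R.card:ℝ) * aN
      = ∑ i ∈ R, ((aN + θ * (q i - aN)) - aN) from by
        rw [Finset.sum_sub_distrib, Finset.sum_const, nsmul_eq_mul]]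
    refine Finset.sum_congr rfl (fun i _ => ?_)
    ring
  set p := ∑ i ∈ R, (aN + θ * (q i - aN)) with hpdef
  set qq := ∑ i ∈ R, (aN + θ * (q i - aN))^2 with hqqdef
  set n2 := ∑ i ∈ R, 2 * (aN + θ * (q i - aN)) * (q i - aN) with hn2def
  set dd := ∑ i ∈ R, (q i - aN) with hdddef
  calc (N:ℝ) * θ * ((n2 * p - qq * dd) / p^2)
      = ((N:ℝ) * ((θ * n2) * p - qq * (θ * dd))) / p^2 := by ring
    _ = (N:ℝ) * qq / p + (R.card : ℝ) * qq / p^2 - 2 := by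
        rw [hn2, hdd]
        have hpne : p ≠ 0 := ne_of_gt hp
        have key : (N:ℝ) * aN = 1 := by rw [haN]; field_simp
        have expand : (N:ℝ) * ((2*qq - 2*aN*p)*p - qq*(p - (R.card:ℝ)*aN))
            = ((N:ℝ)*qq)*p - 2*((N:ℝ)*aN)*p^2 + ((N:ℝ)*aN)*((R.card:ℝ)*qq) := by ring
        rw [expand, key]
        field_simp
        ring

lemma Ederiv_pos (hN : 2 ≤ N) (hC1 : 1 ≤ C) (hCN : C < N) (hqpos : ∀ i, 0 < q i)
    (hqsum : ∑ i, q i = 1) (hqu : q ≠ fun _ => (N : ℝ)⁻¹)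
    {θ : ℝ} (hθ0 : 0 < θ) (hθ1 : θ ≤ 1) : 0 < Ederiv N C q θ := by
  obtain ⟨i0, j0, hij⟩ := exists_ne hN hqsum hqu
  have hP : ∀ k, 0 < (N:ℝ)⁻¹ + θ * (q k - (N:ℝ)⁻¹) := P_pos hN hqpos hθ0 hθ1
  have hPsum := P_sum hN hqsum θ
  have hPne : ((N:ℝ)⁻¹ + θ * (q i0 - (N:ℝ)⁻¹)) ≠ ((N:ℝ)⁻¹ + θ * (q j0 - (N:ℝ)⁻¹)) := by
    intro h
    apply hij
    have h2 : θ * (q i0 - (N:ℝ)⁻¹) = θ * (q j0 - (N:ℝ)⁻¹) := by linarith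
    have h3 := mul_left_cancel₀ (ne_of_gt hθ0) h2
    linarith
  have hmain := main_pos N C hN hC1 hCN (fun k => (N:ℝ)⁻¹ + θ * (q k - (N:ℝ)⁻¹))
    hP hPsum i0 j0 hPne
  have hNθ : 0 < (N:ℝ) * θ := by
    have : (0:ℝ) < (N:ℝ) := by positivity
    exact mul_pos this hθ0
  have hpos : 0 < (N:ℝ) * θ * Ederiv N C q θ := by
    rw [Ederiv_eq hN hC1 hCN hqpos hθ0 hθ1]
    exact hmain
  by_contra h
  push_neg at h
  nlinarith [mul_nonpos_of_nonneg_of_nonpos (le_of_lt hNθ) h]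


end RadialAux

/-- Radial stochastic improvement for move-to-front search cost: for a
nonuniform `q ∈ Δ_N°` and `p(θ) = u + θ(q - u)`, if `0 < θ₁ < θ₂ ≤ 1` then
for every capacity `1 ≤ C < N` one has `H_C(p(θ₂)) > H_C(p(θ₁))`,
equivalently `1 - H_C(p(θ₂)) < 1 - H_C(p(θ₁))`; i.e. the search cost under
`p(θ₂)` is strictly smaller in the usual stochastic order. -/
theorem radial_stochastic_improvement (N : ℕ) (hN : 2 ≤ N)
    (q : Fin N → ℝ) (hqpos : ∀ i, 0 < q i) (hqsum : ∑ i, q i = 1)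
    (hqu : q ≠ fun _ => (N : ℝ)⁻¹)
    (θ₁ θ₂ : ℝ) (hθ₁ : 0 < θ₁) (hθ₁₂ : θ₁ < θ₂) (hθ₂ : θ₂ ≤ 1)
    (C : ℕ) (hC1 : 1 ≤ C) (hCN : C < N) :
    hitRate N C (fun i => (N : ℝ)⁻¹ + θ₂ * (q i - (N : ℝ)⁻¹)) >
        hitRate N C (fun i => (N : ℝ)⁻¹ + θ₁ * (q i - (N : ℝ)⁻¹)) ∧
      1 - hitRate N C (fun i => (N : ℝ)⁻¹ + θ₂ * (q i - (N : ℝ)⁻¹)) <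
        1 - hitRate N C (fun i => (N : ℝ)⁻¹ + θ₁ * (q i - (N : ℝ)⁻¹)) := by
  have hsub : ∀ x : ℝ, x ∈ Set.Icc θ₁ θ₂ → 0 < x ∧ x ≤ 1 :=
    fun x hx => ⟨lt_of_lt_of_le hθ₁ hx.1, le_trans hx.2 hθ₂⟩
  have hasD : ∀ x ∈ Set.Icc θ₁ θ₂,
      HasDerivAt (fun t => hitRate N C (fun i => (N:ℝ)⁻¹ + t * (q i - (N:ℝ)⁻¹)))
        (RadialAux.Ederiv N C q x) x := by
    intro x hx
    obtain ⟨hx0, hx1⟩ := hsub x hx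
    refine RadialAux.hasDeriv_hitRate N C q x (fun m hm R hR => ?_)
    rw [Finset.mem_Icc] at hm
    rw [Finset.mem_powersetCard] at hR
    have hRne : R.Nonempty := Finset.card_pos.mp (by omega)
    exact ne_of_gt (Finset.sum_pos (fun i _ => RadialAux.P_pos hN hqpos hx0 hx1 i) hRne)
  have hmono : StrictMonoOn
      (fun t => hitRate N C (fun i => (N:ℝ)⁻¹ + t * (q i - (N:ℝ)⁻¹))) (Set.Icc θ₁ θ₂) := by
    refine strictMonoOn_of_deriv_pos (convex_Icc θ₁ θ₂)
      (fun x hx => (hasD x hx).continuousAt.continuousWithinAt) (fun x hx => ?_)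
    rw [interior_Icc] at hx
    have hxIcc : x ∈ Set.Icc θ₁ θ₂ := ⟨le_of_lt hx.1, le_of_lt hx.2⟩
    rw [(hasD x hxIcc).deriv]
    obtain ⟨hx0, hx1⟩ := hsub x hxIcc
    exact RadialAux.Ederiv_pos hN hC1 hCN hqpos hqsum hqu hx0 hx1
  have hlt := hmono (Set.mem_Icc.mpr ⟨le_refl θ₁, le_of_lt hθ₁₂⟩)
    (Set.mem_Icc.mpr ⟨le_of_lt hθ₁₂, le_refl θ₂⟩) hθ₁₂
  exact ⟨hlt, by linarith⟩
end

section
/- Let N ≥ 2 and 1 ≤ C ≤ N. Let A_1,…,A_N be independent random variables with A_j exponentially distributed with rate λ_j > 0, and for each k define π_k(λ) = P(k ∈ S_C), where S_C is the (almost surely well-defined) set of the C indices with smallest values among A_1,…,A_N; equivalently π_k(λ) = P( #{ j ≠ k : A_j < A_k } ≤ C − 1 ). If λ_k ≥ λ_i, then π_k(λ) ≥ π_i(λ). Consequently, (λ_a − λ_b)(π_a(λ) − π_b(λ)) ≥ 0 for all indices a, b. -/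
open Finset MeasureTheory ProbabilityTheory

lemma expMeasure_Iic_eq {r : ℝ} (hr : 0 < r) (t : ℝ) :
    expMeasure r (Set.Iic t)
      = ENNReal.ofReal (if 0 ≤ t then 1 - Real.exp (-(r * t)) else 0) := by
  rw [expMeasure, gammaMeasure, withDensity_apply _ measurableSet_Iic]
  have h : gammaPDF 1 r = exponentialPDF r := rfl
  rw [h]
  exact lintegral_exponentialPDF_eq_antiDeriv hr t

lemma expMeasure_Iio_zero (r : ℝ) : expMeasure r (Set.Iio 0) = 0 := by
  rw [expMeasure, gammaMeasure, withDensity_apply _ measurableSet_Iio]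
  have h : gammaPDF 1 r = exponentialPDF r := rfl
  rw [h]
  exact lintegral_exponentialPDF_of_nonpos le_rfl

lemma expMeasure_map_mul {r c : ℝ} (hr : 0 < r) (hc : 0 < c) :
    Measure.map (fun x => c * x) (expMeasure r) = expMeasure (r / c) := by
  haveI h1 : IsProbabilityMeasure (expMeasure r) := isProbabilityMeasure_expMeasure hr
  have hm : Measurable fun x : ℝ => c * x := by fun_prop
  haveI h2 : IsProbabilityMeasure (Measure.map (fun x => c * x) (expMeasure r)) :=
    Measure.isProbabilityMeasure_map hm.aemeasurable
  refine MeasureTheory.Measure.ext_of_Iic _ _ fun t => ?_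
  rw [Measure.map_apply hm measurableSet_Iic]
  have hpre : (fun x => c * x) ⁻¹' Set.Iic t = Set.Iic (t / c) := by
    ext x
    simp only [Set.mem_preimage, Set.mem_Iic]
    rw [le_div_iff₀ hc, mul_comm]
  rw [hpre, expMeasure_Iic_eq hr, expMeasure_Iic_eq (div_pos hr hc)]
  have hiff : 0 ≤ t / c ↔ 0 ≤ t := by rw [le_div_iff₀ hc, zero_mul]
  by_cases ht : 0 ≤ t
  · rw [if_pos (hiff.mpr ht), if_pos ht, show r * (t / c) = r / c * t by ring]
  · rw [if_neg (fun h => ht (hiff.mp h)), if_neg ht]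

lemma pi_map_piMap {N : ℕ} (μ : Fin N → Measure ℝ) [∀ j, IsProbabilityMeasure (μ j)]
    (f : Fin N → ℝ → ℝ) (hf : ∀ j, Measurable (f j)) :
    Measure.map (fun (x : Fin N → ℝ) j => f j (x j)) (Measure.pi μ)
      = Measure.pi fun j => Measure.map (f j) (μ j) := by
  haveI : ∀ j, IsProbabilityMeasure (Measure.map (f j) (μ j)) :=
    fun j => Measure.isProbabilityMeasure_map (hf j).aemeasurable
  have hF : Measurable fun (x : Fin N → ℝ) j => f j (x j) :=
    measurable_pi_lambda _ fun j => (hf j).comp (measurable_pi_apply j)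
  refine (Measure.pi_eq fun s hs => ?_).symm
  rw [Measure.map_apply hF (MeasurableSet.univ_pi hs)]
  have hpre : (fun (x : Fin N → ℝ) j => f j (x j)) ⁻¹' Set.pi Set.univ s
      = Set.pi Set.univ fun j => f j ⁻¹' s j := by
    ext x; simp [Set.mem_pi]
  rw [hpre, Measure.pi_pi]
  exact Finset.prod_congr rfl fun j _ => (Measure.map_apply (hf j) (hs j)).symm

/-- Occupancy monotonicity: if `A_1,…,A_N` are independent exponential
random variables with rates `λ_j > 0` and
`π_k(λ) = P(#{j ≠ k : A_j < A_k} ≤ C - 1)` is the probability that item `k`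
belongs to the stationary LRU cache of capacity `C` (the set of the `C`
indices with smallest ages), then `λ_k ≥ λ_i` implies `π_k(λ) ≥ π_i(λ)`;
consequently `(λ_a - λ_b)(π_a(λ) - π_b(λ)) ≥ 0` for all `a, b`. -/
theorem occupancy_monotonicity
    {Ω : Type*} [MeasureSpace Ω] [IsProbabilityMeasure (ℙ : Measure Ω)]
    (N C : ℕ) (hN : 2 ≤ N) (hC1 : 1 ≤ C) (hCN : C ≤ N)
    (lam : Fin N → ℝ) (hlam : ∀ j, 0 < lam j)
    (A : Fin N → Ω → ℝ) (hA : ∀ j, Measurable (A j))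
    (hindep : iIndepFun A ℙ)
    (hlaw : ∀ j, Measure.map (A j) ℙ = expMeasure (lam j))
    (pi : Fin N → ℝ)
    (hpi : ∀ k, pi k =
      (ℙ {ω | (Finset.univ.filter fun j => j ≠ k ∧ A j ω < A k ω).card ≤ C - 1}).toReal) :
    (∀ i k, lam i ≤ lam k → pi i ≤ pi k) ∧
      (∀ a b, 0 ≤ (lam a - lam b) * (pi a - pi b)) := by
  classical
  set μs : Fin N → Measure ℝ := fun j => expMeasure (lam j) with hμs
  haveI hprob : ∀ j, IsProbabilityMeasure (μs j) :=
    fun j => isProbabilityMeasure_expMeasure (hlam j)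
  haveI : IsProbabilityMeasure (Measure.pi μs) := inferInstance
  set B : Fin N → Set (Fin N → ℝ) :=
    fun k => {x | (Finset.univ.filter fun j => j ≠ k ∧ x j < x k).card ≤ C - 1} with hB
  have hBmeas : ∀ k, MeasurableSet (B k) := by
    intro k
    have hcnt : Measurable fun x : Fin N → ℝ =>
        (Finset.univ.filter fun j => j ≠ k ∧ x j < x k).card := by
      simp_rw [Finset.card_filter]
      apply Finset.measurable_sum
      intro j _
      by_cases hj : j = k
      · simp only [hj, ne_eq, not_true_eq_false, false_and, if_false]
        exact measurable_const
      · have hj' : ∀ x : Fin N → ℝ, (if j ≠ k ∧ x j < x k then (1:ℕ) else 0)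
            = if x j < x k then 1 else 0 := fun x => by simp [hj]
        simp_rw [hj']
        exact Measurable.ite
          (measurableSet_lt (measurable_pi_apply j) (measurable_pi_apply k))
          measurable_const measurable_const
    exact hcnt (measurableSet_Iic : MeasurableSet (Set.Iic (C - 1)))
  set T : Ω → (Fin N → ℝ) := fun ω j => A j ω with hT'
  have hTmeas : Measurable T := measurable_pi_lambda _ fun j => hA j
  have hmap : Measure.map T ℙ = Measure.pi μs := by
    refine (Measure.pi_eq fun s hs => ?_).symm
    rw [Measure.map_apply hTmeas (MeasurableSet.univ_pi hs)]
    have hpre : T ⁻¹' Set.pi Set.univ s = ⋂ j ∈ (Finset.univ : Finset (Fin N)), A j ⁻¹' s j := by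
      ext ω; simp [hT', Set.mem_pi]
    rw [hpre, hindep.measure_inter_preimage_eq_mul Finset.univ (fun j _ => hs j)]
    refine Finset.prod_congr rfl fun j _ => ?_
    show ℙ (A j ⁻¹' s j) = expMeasure (lam j) (s j)
    rw [← hlaw j, Measure.map_apply (hA j) (hs j)]
  have hπ : ∀ k, pi k = ((Measure.pi μs) (B k)).toReal := by
    intro k
    rw [hpi k, ← hmap, Measure.map_apply hTmeas (hBmeas k)]
    rfl
  have key : ∀ i k, lam i ≤ lam k → Measure.pi μs (B i) ≤ Measure.pi μs (B k) := by
    intro i k hik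
    rcases eq_or_ne i k with rfl | hne
    · exact le_rfl
    set σ : Equiv.Perm (Fin N) := Equiv.swap i k with hσ
    set μs' : Fin N → Measure ℝ := fun j => μs (σ j) with hμs'
    haveI hprob' : ∀ j, IsProbabilityMeasure (μs' j) :=
      fun j => isProbabilityMeasure_expMeasure (hlam (σ j))
    have hσi : σ i = k := by rw [hσ]; exact Equiv.swap_apply_left i k
    have hσk : σ k = i := by rw [hσ]; exact Equiv.swap_apply_right i k
    have hσσ : ∀ j, σ (σ j) = j := fun j => by rw [hσ]; exact Equiv.swap_apply_self i k j
    have hEx : ∀ (x : Fin N → ℝ) j,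
        (MeasurableEquiv.piCongrLeft (fun _ => ℝ) σ) x j = x (σ j) := by
      intro x j
      have h := MeasurableEquiv.piCongrLeft_apply_apply (β := fun _ => ℝ) σ x (σ j)
      rwa [hσσ] at h
    have hpre : (⇑(MeasurableEquiv.piCongrLeft (fun _ => ℝ) σ)) ⁻¹' (B i) = B k := by
      ext x
      simp only [Set.mem_preimage, hB, Set.mem_setOf_eq, hEx, hσi]
      have hcard : (Finset.univ.filter fun j => j ≠ i ∧ x (σ j) < x k).card
          = (Finset.univ.filter fun j => j ≠ k ∧ x j < x k).card := by
        apply Finset.card_bij (fun j _ => σ j)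
        · intro j hj
          simp only [Finset.mem_filter, Finset.mem_univ, true_and] at hj ⊢
          exact ⟨fun h' => hj.1 (σ.injective (h'.trans hσi.symm)), hj.2⟩
        · intro j1 _ j2 _ h'
          exact σ.injective h'
        · intro j' hj'
          simp only [Finset.mem_filter, Finset.mem_univ, true_and] at hj'
          refine ⟨σ j', ?_, hσσ j'⟩
          simp only [Finset.mem_filter, Finset.mem_univ, true_and, hσσ]
          refine ⟨fun h' => hj'.1 ?_, hj'.2⟩
          have h2 := congrArg σ h'
          rwa [hσσ, hσi] at h2
      rw [hcard]
    have hswap : Measure.pi μs (B i) = Measure.pi μs' (B k) := by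
      have h := Measure.pi_map_piCongrLeft (β := fun _ => ℝ) σ μs
      calc Measure.pi μs (B i)
          = (Measure.pi fun j => μs (σ j)).map
              (MeasurableEquiv.piCongrLeft (fun _ => ℝ) σ) (B i) := by rw [h]
        _ = (Measure.pi fun j => μs (σ j))
              ((⇑(MeasurableEquiv.piCongrLeft (fun _ => ℝ) σ)) ⁻¹' (B i)) :=
            MeasurableEquiv.map_apply _ _
        _ = Measure.pi μs' (B k) := by rw [hpre]
    have hmono : Measure.pi μs' (B k) ≤ Measure.pi μs (B k) := by
      have hlamk : (0:ℝ) < lam k := hlam k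
      have hlami : (0:ℝ) < lam i := hlam i
      have hlamkne : lam k ≠ 0 := ne_of_gt hlamk
      have hlamine : lam i ≠ 0 := ne_of_gt hlami
      set c : ℝ := lam i / lam k with hc
      have hc0 : 0 < c := div_pos hlami hlamk
      have hc1 : c ≤ 1 := by rw [hc, div_le_one hlamk]; exact hik
      have h1c : 1 ≤ c⁻¹ := by
        have := inv_anti₀ hc0 hc1
        simpa using this
      set f : Fin N → ℝ → ℝ :=
        fun j t => if j = k then c * t else if j = i then c⁻¹ * t else t with hf
      have hfm : ∀ j, Measurable (f j) := by
        intro j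
        by_cases h1 : j = k
        · simpa [hf, h1] using (by fun_prop : Measurable fun t : ℝ => c * t)
        · by_cases h2 : j = i
          · simpa [hf, h1, h2, hne] using (by fun_prop : Measurable fun t : ℝ => c⁻¹ * t)
          · simpa [hf, h1, h2] using measurable_id'
      have hFm : Measurable fun (x : Fin N → ℝ) j => f j (x j) :=
        measurable_pi_lambda _ fun j => (hfm j).comp (measurable_pi_apply j)
      have hmapf : Measure.map (fun (x : Fin N → ℝ) j => f j (x j)) (Measure.pi μs')
          = Measure.pi μs := by
        rw [pi_map_piMap μs' f hfm]
        congr 1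
        funext j
        by_cases h1 : j = k
        · rw [h1]
          have hfj : f k = fun t => c * t := by funext t; simp [hf]
          have hμ'k : μs' k = expMeasure (lam i) := by simp only [hμs', hσk, hμs]
          have hμk : μs k = expMeasure (lam k) := by simp only [hμs]
          rw [hfj, hμ'k, hμk, expMeasure_map_mul hlami hc0]
          congr 1
          rw [hc]
          field_simp
        · by_cases h2 : j = i
          · rw [h2]
            have hfj : f i = fun t => c⁻¹ * t := by
              funext t; simp [hf, hne]
            have hμ'i : μs' i = expMeasure (lam k) := by simp only [hμs', hσi, hμs]
            have hμi : μs i = expMeasure (lam i) := by simp only [hμs]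
            rw [hfj, hμ'i, hμi, expMeasure_map_mul hlamk (inv_pos.mpr hc0)]
            congr 1
            rw [hc]
            field_simp
          · have hfj : f j = fun t => t := by funext t; simp [hf, h1, h2]
            have hμ'j : μs' j = μs j := by
              simp only [hμs']
              congr 1
              rw [hσ]
              exact Equiv.swap_apply_of_ne_of_ne h2 h1
            rw [hfj, hμ'j]
            exact Measure.map_id
      set G : Set (Fin N → ℝ) := {x | 0 ≤ x i ∧ 0 ≤ x k} with hGdef
      have hGnull : Measure.pi μs' Gᶜ = 0 := by
        have hsub : Gᶜ ⊆ (Function.eval i ⁻¹' Set.Iio 0) ∪ (Function.eval k ⁻¹' Set.Iio 0) := by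
          intro x hx
          simp only [hGdef, Set.mem_compl_iff, Set.mem_setOf_eq, not_and_or, not_le] at hx
          rcases hx with hx | hx
          · exact Or.inl hx
          · exact Or.inr hx
        refine measure_mono_null hsub (measure_union_null ?_ ?_)
        · exact Measure.pi_eval_preimage_null _ (expMeasure_Iio_zero _)
        · exact Measure.pi_eval_preimage_null _ (expMeasure_Iio_zero _)
      have hsub : B k ∩ G ⊆ (fun (x : Fin N → ℝ) j => f j (x j)) ⁻¹' B k := by
        rintro x ⟨hxB, hxi, hxk⟩
        simp only [hB, Set.mem_setOf_eq, Set.mem_preimage] at hxB ⊢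
        refine le_trans (Finset.card_le_card ?_) hxB
        intro j hj
        simp only [Finset.mem_filter, Finset.mem_univ, true_and] at hj ⊢
        obtain ⟨hjk, hlt⟩ := hj
        refine ⟨hjk, ?_⟩
        have hfk : f k (x k) = c * x k := by simp [hf]
        have hck : c * x k ≤ x k := by nlinarith
        by_cases hji : j = i
        · subst hji
          have hfi : f j (x j) = c⁻¹ * x j := by simp [hf, hjk]
          rw [hfi, hfk] at hlt
          have hle : x j ≤ c⁻¹ * x j := le_mul_of_one_le_left hxi h1c
          linarith
        · have hfj : f j (x j) = x j := by simp [hf, hjk, hji]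
          rw [hfj, hfk] at hlt
          linarith
      calc Measure.pi μs' (B k)
          ≤ Measure.pi μs' ((B k ∩ G) ∪ Gᶜ) := measure_mono (by
            intro x hx
            by_cases h : x ∈ G
            · exact Or.inl ⟨hx, h⟩
            · exact Or.inr h)
        _ ≤ Measure.pi μs' (B k ∩ G) + Measure.pi μs' Gᶜ := measure_union_le _ _
        _ = Measure.pi μs' (B k ∩ G) := by rw [hGnull, add_zero]
        _ ≤ Measure.pi μs' ((fun (x : Fin N → ℝ) j => f j (x j)) ⁻¹' B k) := measure_mono hsub
        _ = Measure.map (fun (x : Fin N → ℝ) j => f j (x j)) (Measure.pi μs') (B k) :=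
            (Measure.map_apply hFm (hBmeas k)).symm
        _ = Measure.pi μs (B k) := by rw [hmapf]
    rw [hswap]; exact hmono
  have main : ∀ i k, lam i ≤ lam k → pi i ≤ pi k := by
    intro i k h
    rw [hπ i, hπ k]
    exact (ENNReal.toReal_le_toReal (measure_ne_top _ _) (measure_ne_top _ _)).mpr (key i k h)
  refine ⟨main, fun a b => ?_⟩
  rcases le_total (lam a) (lam b) with h | h
  · have h2 := main a b h
    nlinarith
  · have h2 := main b a h
    nlinarith
end

section
/- Let N ≥ 2 and 1 ≤ C < N, and fix indices i ≠ k in {1,…,N}. Let A_1,…,A_N be independent random variables with A_j exponentially distributed with rate λ_j > 0, let π_k(λ) = P( #{ j ≠ k : A_j < A_k } ≤ C − 1 ), and let M_{ik}(t) = #{ j ∉ {i,k} : A_j < t }. Then the partial derivative of π_k with respect to λ_i exists at every λ ∈ (0,∞)^N and equals ∂π_k/∂λ_i (λ) = −λ_k · G_{ik}(λ), where G_{ik}(λ) = ∫_0^∞ t e^{−(λ_i+λ_k)t} P(M_{ik}(t) = C − 1) dt. Moreover G_{ik}(λ) = G_{ki}(λ) and G_{ik}(λ) > 0. -/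
open Finset MeasureTheory ProbabilityTheory

/-- The stationary LRU occupancy probability of item `k` at rate vector
`λ`: the probability, under independent exponential ages `A_j` with rates
`λ_j` (i.e. under the product of exponential measures), that fewer than `C`
of the other items have age smaller than `A_k`, i.e.
`π_k(λ) = P(#{j ≠ k : A_j < A_k} ≤ C - 1)`. -/
noncomputable def occ (N C : ℕ) (k : Fin N) (lam : Fin N → ℝ) : ℝ :=
  ((Measure.pi fun j => ProbabilityTheory.expMeasure (lam j))
    {a : Fin N → ℝ |
      (Finset.univ.filter fun j => j ≠ k ∧ a j < a k).card ≤ C - 1}).toReal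

/-- The sensitivity kernel
`G_{ik}(λ) = ∫_0^∞ t e^{-(λ_i+λ_k)t} P(M_{ik}(t) = C-1) dt`, where
`P(M_{ik}(t) = C-1) = Σ_{W ⊆ {1,…,N}\{i,k}, |W|=C-1}
  Π_{j∈W}(1 - e^{-λ_j t}) Π_{j∉W∪{i,k}} e^{-λ_j t}`. -/
noncomputable def Gkernel (N C : ℕ) (i k : Fin N) (lam : Fin N → ℝ) : ℝ :=
  ∫ t in Set.Ioi (0 : ℝ),
    t * Real.exp (-(lam i + lam k) * t) *
      ∑ W ∈ ((Finset.univ : Finset (Fin N)) \ {i, k}).powersetCard (C - 1),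
        (∏ j ∈ W, (1 - Real.exp (-(lam j) * t))) *
          ∏ j ∈ ((Finset.univ : Finset (Fin N)) \ {i, k}) \ W,
            Real.exp (-(lam j) * t)

open Real Set
open scoped ENNReal

-- integrability of t * exp(-c t) on Ioi 0
lemma integrableOn_id_mul_exp {c : ℝ} (hc : 0 < c) :
    IntegrableOn (fun t : ℝ => t * Real.exp (-c * t)) (Set.Ioi 0) := by
  have hint : IntegrableOn (fun t : ℝ => (2 / c) * Real.exp (-(c/2) * t)) (Set.Ioi 0) :=
    (exp_neg_integrableOn_Ioi 0 (by linarith)).const_mul _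
  refine hint.integrable.mono ?_ ?_
  · exact (continuous_id.mul (Real.continuous_exp.comp (continuous_const.mul continuous_id))).aestronglyMeasurable
  · filter_upwards [ae_restrict_mem measurableSet_Ioi] with t ht
    have ht0 : (0:ℝ) < t := ht
    have h1 : t ≤ (2 / c) * Real.exp ((c/2) * t) := by
      have := Real.add_one_le_exp ((c/2) * t)
      have h2 : (c/2) * t ≤ Real.exp ((c/2)*t) := by nlinarith [Real.exp_pos ((c/2)*t)]
      calc t = (2/c) * ((c/2) * t) := by field_simp
        _ ≤ (2/c) * Real.exp ((c/2)*t) := by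
            apply mul_le_mul_of_nonneg_left h2 (by positivity)
    rw [Real.norm_eq_abs, Real.norm_eq_abs]
    rw [abs_of_nonneg (by positivity), abs_of_nonneg (by positivity)]
    calc t * Real.exp (-c * t) ≤ ((2/c) * Real.exp ((c/2)*t)) * Real.exp (-c*t) := by
          apply mul_le_mul_of_nonneg_right h1 (Real.exp_pos _).le
      _ = (2/c) * Real.exp (-(c/2) * t) := by
          rw [mul_assoc, ← Real.exp_add]; ring_nf

lemma expMeasure_Iic {r t : ℝ} (hr : 0 < r) (ht : 0 ≤ t) :
    expMeasure r (Set.Iic t) = ENNReal.ofReal (1 - Real.exp (-(r*t))) := by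
  rw [expMeasure, gammaMeasure, withDensity_apply _ measurableSet_Iic]
  have : ∀ x, gammaPDF 1 r x = exponentialPDF r x := fun x => rfl
  simp_rw [this]
  rw [lintegral_exponentialPDF_eq_antiDeriv hr, if_pos ht]

lemma expMeasure_singleton {r t : ℝ} : expMeasure r {t} = 0 := by
  rw [expMeasure, gammaMeasure]
  exact (withDensity_absolutelyContinuous _ _) (measure_singleton t)

lemma expMeasure_Iio {r t : ℝ} (hr : 0 < r) (ht : 0 ≤ t) :
    expMeasure r (Set.Iio t) = ENNReal.ofReal (1 - Real.exp (-(r*t))) := by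
  rw [← Set.Iic_diff_right, measure_diff_null expMeasure_singleton]
  exact expMeasure_Iic hr ht

lemma expMeasure_Ici {r t : ℝ} (hr : 0 < r) (ht : 0 ≤ t) :
    expMeasure r (Set.Ici t) = ENNReal.ofReal (Real.exp (-(r*t))) := by
  have hP : IsProbabilityMeasure (expMeasure r) := isProbabilityMeasure_expMeasure hr
  have h := measure_compl (μ := expMeasure r) (s := Set.Iio t) measurableSet_Iio (measure_ne_top _ _)
  rw [compl_Iio] at h
  rw [h, measure_univ, expMeasure_Iio hr ht]
  have he : Real.exp (-(r*t)) ≤ 1 := Real.exp_le_one_iff.mpr (by nlinarith)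
  have : (1:ℝ≥0∞) = ENNReal.ofReal 1 := by simp
  rw [this, ← ENNReal.ofReal_sub _ (by nlinarith [Real.exp_pos (-(r*t))])]
  norm_num

section Slice

variable {n : ℕ} (k : Fin (n+1)) (lam : Fin (n+1) → ℝ)

lemma measurable_Ev (S : Finset (Fin (n+1))) :
    MeasurableSet {a : Fin (n+1) → ℝ | ∀ j, j ≠ k → (a j < a k ↔ j ∈ S)} := by
  have heq : {a : Fin (n+1) → ℝ | ∀ j, j ≠ k → (a j < a k ↔ j ∈ S)}
      = ⋂ j, {a : Fin (n+1) → ℝ | j ≠ k → (a j < a k ↔ j ∈ S)} := by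
    ext a; simp only [Set.mem_setOf_eq, Set.mem_iInter]
  rw [heq]
  refine MeasurableSet.iInter fun j => ?_
  by_cases hj : j = k
  · simp only [hj, ne_eq, not_true_eq_false, false_implies, Set.setOf_true]
    exact MeasurableSet.univ
  · by_cases hjS : j ∈ S
    · simp only [hj, hjS, ne_eq, not_false_eq_true, forall_true_left, iff_true]
      exact measurableSet_lt (measurable_pi_apply j) (measurable_pi_apply k)
    · simp only [hj, hjS, ne_eq, not_false_eq_true, forall_true_left, iff_false, not_lt]
      exact measurableSet_le (measurable_pi_apply k) (measurable_pi_apply j)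

lemma prod_erase_eq_prod_succAbove (g : Fin (n+1) → ℝ≥0∞) :
    ∏ j ∈ Finset.univ.erase k, g j = ∏ j : Fin n, g (k.succAbove j) := by
  have h1 : Finset.univ.erase k = ({k}ᶜ : Finset (Fin (n+1))) := by
    ext j; simp [eq_comm]
  rw [h1, ← Fin.image_succAbove_univ, Finset.prod_image
    (fun a _ b _ h => (Fin.succAbove_right_injective (p := k)) h)]

lemma measure_Ev (hlam : ∀ j, 0 < lam j) (S : Finset (Fin (n+1)))
    (hS : S ⊆ Finset.univ.erase k) :
    (Measure.pi fun j => expMeasure (lam j)) {a | ∀ j, j ≠ k → (a j < a k ↔ j ∈ S)}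
    = ∫⁻ t in Set.Ioi (0:ℝ), ENNReal.ofReal (lam k * Real.exp (-(lam k)*t) *
        ((∏ j ∈ S, (1 - Real.exp (-(lam j)*t))) *
         ∏ j ∈ (Finset.univ.erase k) \ S, Real.exp (-(lam j)*t))) := by
  classical
  haveI : ∀ j, SigmaFinite (expMeasure (lam j)) := fun j => by
    haveI := isProbabilityMeasure_expMeasure (hlam j); infer_instance
  set E : Set (Fin (n+1) → ℝ) := {a | ∀ j, j ≠ k → (a j < a k ↔ j ∈ S)} with hE
  have hEm : MeasurableSet E := measurable_Ev k S
  set e := MeasurableEquiv.piFinSuccAbove (fun _ : Fin (n+1) => ℝ) k with he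
  have hmp := measurePreserving_piFinSuccAbove (fun j => expMeasure (lam j)) k
  set ν := Measure.pi fun j : Fin n => expMeasure (lam (k.succAbove j)) with hν
  -- the image set
  set s : Set (ℝ × (Fin n → ℝ)) := e.symm ⁻¹' E with hs
  have hsm : MeasurableSet s := e.symm.measurable hEm
  have hEs : E = e ⁻¹' s := by
    rw [hs, ← Set.preimage_comp]
    simp [Function.comp_def]
  have step1 : (Measure.pi fun j => expMeasure (lam j)) E
      = ((expMeasure (lam k)).prod ν) s := by
    rw [hEs]
    exact hmp.measure_preimage hsm.nullMeasurableSet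
  rw [step1, Measure.prod_apply hsm]
  -- identify slices
  have hslice : ∀ t : ℝ, (Prod.mk t ⁻¹' s)
      = Set.pi Set.univ (fun j => if k.succAbove j ∈ S then Set.Iio t else Set.Ici t) := by
    intro t
    ext y
    simp only [hs, Set.mem_preimage, MeasurableEquiv.piFinSuccAbove_symm_apply, hE,
      Set.mem_setOf_eq, Set.mem_pi, Set.mem_univ, forall_true_left]
    constructor
    · intro h j
      have hj := h (k.succAbove j) (Fin.succAbove_ne k j)
      simp only [he, MeasurableEquiv.piFinSuccAbove_symm_apply, Fin.insertNthEquiv_apply,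
        Fin.insertNth_apply_succAbove, Fin.insertNth_apply_same] at hj
      by_cases hjS : k.succAbove j ∈ S
      · simp only [hjS, if_true, Set.mem_Iio]; exact hj.mpr hjS
      · simp only [hjS, if_false, Set.mem_Ici]
        by_contra hlt
        exact hjS (hj.mp (lt_of_not_ge hlt))
    · intro h j hj
      obtain ⟨j', rfl⟩ := Fin.exists_succAbove_eq hj
      simp only [he, MeasurableEquiv.piFinSuccAbove_symm_apply, Fin.insertNthEquiv_apply,
        Fin.insertNth_apply_succAbove, Fin.insertNth_apply_same]
      have := h j'
      by_cases hjS : k.succAbove j' ∈ S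
      · simp only [hjS, if_true, Set.mem_Iio] at this
        exact ⟨fun _ => hjS, fun _ => this⟩
      · simp only [hjS, if_false, Set.mem_Ici] at this
        exact ⟨fun hlt => absurd hlt (not_lt.mpr this), fun hmem => absurd hmem hjS⟩
  have hslicem : ∀ t : ℝ, ν (Prod.mk t ⁻¹' s)
      = ∏ j : Fin n, expMeasure (lam (k.succAbove j))
          (if k.succAbove j ∈ S then Set.Iio t else Set.Ici t) := by
    intro t
    rw [hslice t, hν, Measure.pi_pi]
  simp only [neg_mul]
  have hcontP : Continuous (fun t : ℝ => (∏ j ∈ S, (1 - Real.exp (-(lam j * t)))) *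
      ∏ j ∈ (Finset.univ.erase k) \ S, Real.exp (-(lam j * t))) := by
    apply Continuous.mul
    · apply continuous_finset_prod
      intro j _
      fun_prop
    · apply continuous_finset_prod
      intro j _
      fun_prop
  have hae : ∀ᵐ t ∂(expMeasure (lam k)), t ∈ Set.Ioi (0:ℝ) := by
    rw [ae_iff]
    have hcompl : {t : ℝ | ¬ t ∈ Set.Ioi (0:ℝ)} = Set.Iic 0 := by ext t; simp
    rw [hcompl]
    simpa using expMeasure_Iic (hlam k) le_rfl
  have step2 : ∫⁻ t, ν (Prod.mk t ⁻¹' s) ∂(expMeasure (lam k))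
      = ∫⁻ t in Set.Ioi (0:ℝ), ENNReal.ofReal ((∏ j ∈ S, (1 - Real.exp (-(lam j * t)))) *
          ∏ j ∈ (Finset.univ.erase k) \ S, Real.exp (-(lam j * t))) ∂(expMeasure (lam k)) := by
    conv_lhs => rw [← Measure.restrict_eq_self_of_ae_mem hae]
    refine setLIntegral_congr_fun measurableSet_Ioi (fun t ht => ?_)
    have ht0 : (0:ℝ) ≤ t := le_of_lt ht
    rw [hslicem t,
      ← prod_erase_eq_prod_succAbove k
        (fun j' => expMeasure (lam j') (if j' ∈ S then Set.Iio t else Set.Ici t)),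
      ← Finset.prod_sdiff hS]
    have e1 : ∏ j ∈ (Finset.univ.erase k) \ S,
        expMeasure (lam j) (if j ∈ S then Set.Iio t else Set.Ici t)
        = ENNReal.ofReal (∏ j ∈ (Finset.univ.erase k) \ S, Real.exp (-(lam j * t))) := by
      rw [ENNReal.ofReal_prod_of_nonneg (fun j _ => (Real.exp_pos _).le)]
      refine Finset.prod_congr rfl fun j hj => ?_
      rw [if_neg (Finset.mem_sdiff.mp hj).2, expMeasure_Ici (hlam j) ht0]
    have e2 : ∏ j ∈ S, expMeasure (lam j) (if j ∈ S then Set.Iio t else Set.Ici t)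
        = ENNReal.ofReal (∏ j ∈ S, (1 - Real.exp (-(lam j * t)))) := by
      rw [ENNReal.ofReal_prod_of_nonneg (fun j _ => by
        have : Real.exp (-(lam j * t)) ≤ 1 :=
          Real.exp_le_one_iff.mpr (by nlinarith [hlam j])
        linarith)]
      refine Finset.prod_congr rfl fun j hj => ?_
      rw [if_pos hj, expMeasure_Iio (hlam j) ht0]
    rw [e1, e2, ← ENNReal.ofReal_mul (Finset.prod_nonneg fun j _ => (Real.exp_pos _).le),
      mul_comm]
  have hpdfm : Measurable (gammaPDF 1 (lam k)) :=
    (measurable_gammaPDFReal 1 (lam k)).ennreal_ofReal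
  rw [step2, expMeasure, gammaMeasure, restrict_withDensity measurableSet_Ioi,
    lintegral_withDensity_eq_lintegral_mul _ hpdfm
      ((Continuous.measurable hcontP).ennreal_ofReal)]
  refine setLIntegral_congr_fun measurableSet_Ioi (fun t ht => ?_)
  simp only [Pi.mul_apply]
  have hpdf : gammaPDF 1 (lam k) t = exponentialPDF (lam k) t := rfl
  rw [hpdf, exponentialPDF_of_nonneg (le_of_lt ht),
    ← ENNReal.ofReal_mul (mul_nonneg (hlam k).le (Real.exp_pos _).le)]

end Slice


noncomputable def wInt {N : ℕ} (k : Fin N) (S : Finset (Fin N)) (lam : Fin N → ℝ) : ℝ :=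
  ∫ t in Set.Ioi (0:ℝ), lam k * Real.exp (-(lam k)*t) *
    ((∏ j ∈ S, (1 - Real.exp (-(lam j)*t))) *
     ∏ j ∈ (Finset.univ.erase k) \ S, Real.exp (-(lam j)*t))

section Decomp
variable {n : ℕ} (k : Fin (n+1)) (lam : Fin (n+1) → ℝ)

lemma toReal_measure_Ev (hlam : ∀ j, 0 < lam j) (S : Finset (Fin (n+1)))
    (hS : S ⊆ Finset.univ.erase k) :
    ((Measure.pi fun j => expMeasure (lam j))
      {a | ∀ j, j ≠ k → (a j < a k ↔ j ∈ S)}).toReal = wInt k S lam := by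
  rw [measure_Ev k lam hlam S hS, wInt]
  rw [MeasureTheory.integral_eq_lintegral_of_nonneg_ae]
  · filter_upwards [ae_restrict_mem measurableSet_Ioi] with t ht
    have ht0 : (0:ℝ) ≤ t := le_of_lt ht
    refine mul_nonneg (mul_nonneg (hlam k).le (Real.exp_pos _).le)
      (mul_nonneg (Finset.prod_nonneg fun j _ => ?_)
        (Finset.prod_nonneg fun j _ => (Real.exp_pos _).le))
    have : Real.exp (-(lam j)*t) ≤ 1 := by
      rw [Real.exp_le_one_iff]
      nlinarith [hlam j]
    linarith
  · apply Continuous.aestronglyMeasurable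
    apply Continuous.mul (by fun_prop)
    apply Continuous.mul
    · apply continuous_finset_prod; intro j _; fun_prop
    · apply continuous_finset_prod; intro j _; fun_prop

lemma occ_eq_sum (C : ℕ) (hlam : ∀ j, 0 < lam j) :
    occ (n+1) C k lam
      = ∑ S ∈ (Finset.univ.erase k).powerset.filter (fun S => S.card ≤ C - 1),
          wInt k S lam := by
  classical
  haveI : ∀ j, IsProbabilityMeasure (expMeasure (lam j)) :=
    fun j => isProbabilityMeasure_expMeasure (hlam j)
  rw [occ]
  have hunion : {a : Fin (n+1) → ℝ |
      (Finset.univ.filter fun j => j ≠ k ∧ a j < a k).card ≤ C - 1}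
      = ⋃ S ∈ ((Finset.univ.erase k).powerset.filter (fun S => S.card ≤ C - 1) : Finset _),
          {a : Fin (n+1) → ℝ | ∀ j, j ≠ k → (a j < a k ↔ j ∈ S)} := by
    ext a
    simp only [Set.mem_setOf_eq, Set.mem_iUnion, Finset.mem_filter, Finset.mem_powerset,
      exists_prop]
    constructor
    · intro h
      refine ⟨Finset.univ.filter (fun j => j ≠ k ∧ a j < a k), ⟨?_, h⟩, ?_⟩
      · intro j hj
        simp only [Finset.mem_filter] at hj
        exact Finset.mem_erase.mpr ⟨hj.2.1, Finset.mem_univ j⟩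
      · intro j hj
        simp [hj]
    · rintro ⟨S, ⟨hSsub, hScard⟩, hmem⟩
      have hsel : Finset.univ.filter (fun j => j ≠ k ∧ a j < a k) = S := by
        ext j
        simp only [Finset.mem_filter, Finset.mem_univ, true_and]
        constructor
        · rintro ⟨hjk, hlt⟩; exact (hmem j hjk).mp hlt
        · intro hjS
          have hjk : j ≠ k := Finset.ne_of_mem_erase (hSsub hjS)
          exact ⟨hjk, (hmem j hjk).mpr hjS⟩
      rw [hsel]; exact hScard
  have hsel_eq : ∀ (S : Finset (Fin (n+1))), ∀ a : Fin (n+1) → ℝ,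
      (∀ j, j ≠ k → (a j < a k ↔ j ∈ S)) → S ⊆ Finset.univ.erase k →
      Finset.univ.filter (fun j => j ≠ k ∧ a j < a k) = S := by
    intro S a hmem hSsub
    ext j
    simp only [Finset.mem_filter, Finset.mem_univ, true_and]
    constructor
    · rintro ⟨hjk, hlt⟩; exact (hmem j hjk).mp hlt
    · intro hjS
      have hjk : j ≠ k := Finset.ne_of_mem_erase (hSsub hjS)
      exact ⟨hjk, (hmem j hjk).mpr hjS⟩
  rw [hunion, measure_biUnion_finset ?hd (fun S _ => measurable_Ev k S)]
  · rw [ENNReal.toReal_sum (fun S _ => measure_ne_top _ _)]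
    refine Finset.sum_congr rfl fun S hS => ?_
    simp only [Finset.mem_filter, Finset.mem_powerset] at hS
    exact toReal_measure_Ev k lam hlam S hS.1
  case hd =>
    intro S hSm S' hSm' hne
    simp only [Finset.coe_filter, Finset.mem_powerset, Set.mem_setOf_eq] at hSm hSm'
    rw [Function.onFun, Set.disjoint_left]
    intro a ha ha'
    exact hne (by rw [← hsel_eq S a ha hSm.1, ← hsel_eq S' a ha' hSm'.1])
end Decomp

noncomputable def Jint {N : ℕ} (i k : Fin N) (W : Finset (Fin N)) (lam : Fin N → ℝ) : ℝ :=
  ∫ t in Set.Ioi (0:ℝ), lam k * (t * Real.exp (-(lam i + lam k)*t)) *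
    ((∏ j ∈ W, (1 - Real.exp (-(lam j)*t))) *
     ∏ j ∈ (((Finset.univ : Finset (Fin N)) \ {i, k}) \ W), Real.exp (-(lam j)*t))

section Calc
variable {N : ℕ} (i k : Fin N) (S : Finset (Fin N)) (lam : Fin N → ℝ)

lemma hasDerivAt_wInt (hik : i ≠ k) (hS : S ⊆ Finset.univ.erase k)
    (hlam : ∀ j, 0 < lam j) :
    HasDerivAt (fun x => wInt k S (Function.update lam i x))
      ((if i ∈ S then (1:ℝ) else -1) * Jint i k (S.erase i) lam) (lam i) := by
  classical
  have hki : k ≠ i := hik.symm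
  set W : Finset (Fin N) := S.erase i with hW
  set R : ℝ → ℝ := fun t => (∏ j ∈ W, (1 - Real.exp (-(lam j)*t))) *
      ∏ j ∈ (((Finset.univ : Finset (Fin N)) \ {i, k}) \ W), Real.exp (-(lam j)*t) with hR
  set c : ℝ → ℝ := fun t => lam k * Real.exp (-(lam k)*t) with hc
  set s : ℝ := if i ∈ S then (1:ℝ) else -1 with hsgn
  set φ : ℝ → ℝ → ℝ :=
    fun x t => if i ∈ S then (1 - Real.exp (-x*t)) else Real.exp (-x*t) with hφ
  set F : ℝ → ℝ → ℝ := fun x t => c t * (φ x t * R t) with hF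
  set F' : ℝ → ℝ → ℝ :=
    fun x t => s * (lam k * (t * Real.exp (-(x + lam k)*t)) * R t) with hF'
  have hRcont : Continuous R := by
    apply Continuous.mul
    · apply continuous_finset_prod; intro j _; fun_prop
    · apply continuous_finset_prod; intro j _; fun_prop
  have hR01 : ∀ t : ℝ, 0 ≤ t → 0 ≤ R t ∧ R t ≤ 1 := by
    intro t ht
    have h1 : ∀ j : Fin N, 0 ≤ 1 - Real.exp (-(lam j)*t) ∧ 1 - Real.exp (-(lam j)*t) ≤ 1 := by
      intro j
      have h2 : Real.exp (-(lam j)*t) ≤ 1 := by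
        rw [Real.exp_le_one_iff]; nlinarith [hlam j]
      have h3 : 0 < Real.exp (-(lam j)*t) := Real.exp_pos _
      constructor <;> linarith
    have h4 : ∀ j : Fin N, 0 ≤ Real.exp (-(lam j)*t) ∧ Real.exp (-(lam j)*t) ≤ 1 := by
      intro j
      exact ⟨(Real.exp_pos _).le, by rw [Real.exp_le_one_iff]; nlinarith [hlam j]⟩
    constructor
    · exact mul_nonneg (Finset.prod_nonneg fun j _ => (h1 j).1)
        (Finset.prod_nonneg fun j _ => (h4 j).1)
    · calc R t ≤ 1 * 1 := mul_le_mul (Finset.prod_le_one (fun j _ => (h1 j).1) fun j _ => (h1 j).2)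
            (Finset.prod_le_one (fun j _ => (h4 j).1) fun j _ => (h4 j).2)
            (Finset.prod_nonneg fun j _ => (h4 j).1) zero_le_one
        _ = 1 := one_mul 1
  -- key integrand identity
  have key : ∀ x t : ℝ,
      (Function.update lam i x) k * Real.exp (-((Function.update lam i x) k)*t) *
        ((∏ j ∈ S, (1 - Real.exp (-((Function.update lam i x) j)*t))) *
         ∏ j ∈ (Finset.univ.erase k) \ S, Real.exp (-((Function.update lam i x) j)*t))
      = F x t := by
    intro x t
    have hupk : Function.update lam i x k = lam k := Function.update_of_ne hki x lam
    by_cases hiS : i ∈ S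
    · have hWS : W = S.erase i := hW
      have hP1 : (∏ j ∈ S, (1 - Real.exp (-((Function.update lam i x) j)*t)))
          = (1 - Real.exp (-x*t)) * ∏ j ∈ W, (1 - Real.exp (-(lam j)*t)) := by
        rw [hWS, ← Finset.mul_prod_erase S _ hiS, Function.update_self]
        congr 1
        refine Finset.prod_congr rfl fun j hj => ?_
        rw [Function.update_of_ne (Finset.ne_of_mem_erase hj) x lam]
      have hsets : (Finset.univ.erase k) \ S
          = (((Finset.univ : Finset (Fin N)) \ {i, k}) \ W) := by
        ext j
        by_cases hji : j = i
        · subst hji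
          simp [hW, hiS]
        · simp only [Finset.mem_sdiff, Finset.mem_erase, Finset.mem_univ, true_and,
            Finset.mem_insert, Finset.mem_singleton, hW, hji]
          tauto
      have hP2 : (∏ j ∈ (Finset.univ.erase k) \ S,
            Real.exp (-((Function.update lam i x) j)*t))
          = ∏ j ∈ (((Finset.univ : Finset (Fin N)) \ {i, k}) \ W), Real.exp (-(lam j)*t) := by
        rw [hsets]
        refine Finset.prod_congr rfl fun j hj => ?_
        simp only [Finset.mem_sdiff, Finset.mem_insert, Finset.mem_singleton] at hj
        rw [Function.update_of_ne (fun h => hj.1.2 (Or.inl h)) x lam]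
      rw [hupk, hP1, hP2]
      simp only [hF, hc, hφ]
      rw [if_pos hiS]
      ring
    · have hWS : W = S := by rw [hW, Finset.erase_eq_of_notMem hiS]
      have hP1 : (∏ j ∈ S, (1 - Real.exp (-((Function.update lam i x) j)*t)))
          = ∏ j ∈ W, (1 - Real.exp (-(lam j)*t)) := by
        rw [hWS]
        refine Finset.prod_congr rfl fun j hj => ?_
        rw [Function.update_of_ne (fun h => hiS (by rw [← h]; exact hj)) x lam]
      have himem : i ∈ (Finset.univ.erase k) \ S := by
        simp [Finset.mem_sdiff, Finset.mem_erase, hik, hiS]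
      have hsets : ((Finset.univ.erase k) \ S).erase i
          = (((Finset.univ : Finset (Fin N)) \ {i, k}) \ W) := by
        ext j
        by_cases hji : j = i
        · subst hji
          simp [hWS]
        · simp only [Finset.mem_erase, Finset.mem_sdiff, Finset.mem_univ, true_and,
            Finset.mem_insert, Finset.mem_singleton, hWS, hji]
          tauto
      have hP2 : (∏ j ∈ (Finset.univ.erase k) \ S,
            Real.exp (-((Function.update lam i x) j)*t))
          = Real.exp (-x*t) *
            ∏ j ∈ (((Finset.univ : Finset (Fin N)) \ {i, k}) \ W), Real.exp (-(lam j)*t) := by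
        rw [← Finset.mul_prod_erase _ _ himem, Function.update_self, hsets]
        congr 1
        refine Finset.prod_congr rfl fun j hj => ?_
        simp only [Finset.mem_sdiff, Finset.mem_insert, Finset.mem_singleton] at hj
        rw [Function.update_of_ne (fun h => hj.1.2 (Or.inl h)) x lam]
      rw [hupk, hP1, hP2]
      simp only [hF, hc, hφ]
      rw [if_neg hiS]
      ring
  have hfun : (fun x => wInt k S (Function.update lam i x))
      = fun x => ∫ t in Set.Ioi (0:ℝ), F x t := by
    funext x
    rw [wInt]
    exact setIntegral_congr_fun measurableSet_Ioi fun t _ => key x t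
  rw [hfun]
  -- derivative of the inner function
  have hderiv : ∀ x t : ℝ, HasDerivAt (fun y => F y t) (F' x t) x := by
    intro x t
    have hlin : HasDerivAt (fun y : ℝ => -y * t) (-t) x := by
      simpa using (hasDerivAt_id x).neg.mul_const t
    have hexp : HasDerivAt (fun y : ℝ => Real.exp (-y*t)) (Real.exp (-x*t) * -t) x :=
      hlin.exp
    have hφd : HasDerivAt (fun y => φ y t) (s * (t * Real.exp (-x*t))) x := by
      by_cases hiS : i ∈ S
      · simp only [hφ, hsgn, if_pos hiS]
        have := hexp.const_sub 1
        refine this.congr_deriv ?_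
        ring
      · simp only [hφ, hsgn, if_neg hiS]
        convert hexp using 1
        ring
    have := (hφd.mul_const (R t)).const_mul (c t)
    refine this.congr_deriv ?_
    simp only [hF', hc]
    rw [show (-(x + lam k)*t) = (-x*t) + (-(lam k)*t) by ring, Real.exp_add]
    ring
  have hb : IntegrableOn (fun t : ℝ => lam k * (t * Real.exp (-(lam k) * t)))
      (Set.Ioi (0:ℝ)) := (integrableOn_id_mul_exp (hlam k)).const_mul _
  have hmain := hasDerivAt_integral_of_dominated_loc_of_deriv_le
    (μ := volume.restrict (Set.Ioi (0:ℝ))) (x₀ := lam i) (s := Metric.ball (lam i) (lam i))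
    (F := F) (F' := F') (bound := fun t => lam k * (t * Real.exp (-(lam k) * t)))
    (Metric.ball_mem_nhds _ (hlam i))
    (Filter.Eventually.of_forall fun x => by
      apply Continuous.aestronglyMeasurable
      simp only [hF]
      apply Continuous.mul (by fun_prop)
      apply Continuous.mul ?_ hRcont
      simp only [hφ]
      split_ifs <;> fun_prop)
    (by
      have hint : IntegrableOn (fun t : ℝ => lam k * Real.exp (-(lam k) * t))
          (Set.Ioi (0:ℝ)) := (exp_neg_integrableOn_Ioi 0 (hlam k)).const_mul _
      refine hint.integrable.mono ?_ ?_
      · apply Continuous.aestronglyMeasurable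
        simp only [hF]
        apply Continuous.mul (by fun_prop)
        apply Continuous.mul ?_ hRcont
        simp only [hφ]
        split_ifs <;> fun_prop
      · filter_upwards [ae_restrict_mem measurableSet_Ioi] with t ht
        have ht0 : (0:ℝ) < t := ht
        have hφb : 0 ≤ φ (lam i) t ∧ φ (lam i) t ≤ 1 := by
          simp only [hφ]
          have h2 : Real.exp (-(lam i)*t) ≤ 1 := by
            rw [Real.exp_le_one_iff]; nlinarith [hlam i]
          have h3 : 0 < Real.exp (-(lam i)*t) := Real.exp_pos _
          split_ifs <;> constructor <;> linarith
        have hRb := hR01 t ht0.le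
        have hc0 : (0:ℝ) ≤ lam k * Real.exp (-(lam k)*t) :=
          mul_nonneg (hlam k).le (Real.exp_pos _).le
        simp only [hF, hc, Real.norm_eq_abs]
        rw [abs_of_nonneg (mul_nonneg hc0 (mul_nonneg hφb.1 hRb.1)), abs_of_nonneg hc0]
        calc lam k * Real.exp (-(lam k)*t) * (φ (lam i) t * R t)
            ≤ lam k * Real.exp (-(lam k)*t) * 1 :=
              mul_le_mul_of_nonneg_left
                (mul_le_one₀ hφb.2 hRb.1 hRb.2) hc0
          _ = lam k * Real.exp (-(lam k)*t) := mul_one _)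
    (by
      apply Continuous.aestronglyMeasurable
      simp only [hF']
      fun_prop)
    (by
      filter_upwards [ae_restrict_mem measurableSet_Ioi] with t ht
      intro x hx
      have ht0 : (0:ℝ) < t := ht
      have hx0 : 0 < x := by
        rw [Metric.mem_ball, Real.dist_eq] at hx
        rcases abs_lt.mp hx with ⟨h1, _⟩
        linarith
      simp only [hF', Real.norm_eq_abs]
      have hsabs : |s| = 1 := by rw [hsgn]; split_ifs <;> simp
      rw [abs_mul, hsabs, one_mul, abs_mul, abs_mul]
      have hRb := hR01 t ht0.le
      have hexp_le : Real.exp (-(x + lam k)*t) ≤ Real.exp (-(lam k)*t) :=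
        Real.exp_le_exp.mpr (by nlinarith [hlam k])
      rw [abs_of_pos (hlam k),
        abs_of_nonneg (mul_nonneg ht0.le (Real.exp_pos _).le),
        abs_of_nonneg hRb.1]
      calc lam k * (t * Real.exp (-(x + lam k)*t)) * R t
          ≤ lam k * (t * Real.exp (-(lam k)*t)) * 1 := by
            apply mul_le_mul
            · apply mul_le_mul_of_nonneg_left ?_ (hlam k).le
              exact mul_le_mul_of_nonneg_left hexp_le ht0.le
            · exact hRb.2
            · exact hRb.1
            · exact mul_nonneg (hlam k).le (mul_nonneg ht0.le (Real.exp_pos _).le)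
        _ = lam k * (t * Real.exp (-(lam k)*t)) := mul_one _)
    hb.integrable
    (by
      filter_upwards [ae_restrict_mem measurableSet_Ioi] with t ht
      intro x _
      exact hderiv x t)
  have hval : (∫ t in Set.Ioi (0:ℝ), F' (lam i) t) = s * Jint i k W lam := by
    rw [Jint]
    simp only [hF']
    rw [integral_const_mul]
  rw [hsgn] at hval
  exact hval ▸ hmain.2
end Calc

section Comb
variable {N : ℕ} (i k : Fin N) (lam : Fin N → ℝ)

lemma sum_signed (hik : i ≠ k) (C : ℕ) (hC1 : 1 ≤ C) :
    ∑ S ∈ (Finset.univ.erase k).powerset.filter (fun S => S.card ≤ C - 1),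
      ((if i ∈ S then (1:ℝ) else -1) * Jint i k (S.erase i) lam)
    = - ∑ W ∈ (((Finset.univ : Finset (Fin N)) \ {i,k}).powersetCard (C-1)),
        Jint i k W lam := by
  classical
  set 𝒮 := (Finset.univ.erase k).powerset.filter
    (fun S : Finset (Fin N) => S.card ≤ C - 1) with h𝒮
  set A := ((Finset.univ : Finset (Fin N)) \ {i,k}).powerset.filter
    (fun W => W.card + 1 ≤ C - 1) with hA
  set B := ((Finset.univ : Finset (Fin N)) \ {i,k}).powerset.filter
    (fun W => W.card ≤ C - 1) with hB
  have hsub_iff : ∀ T : Finset (Fin N),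
      (T ⊆ Finset.univ.erase k ∧ i ∉ T) ↔ T ⊆ (Finset.univ : Finset (Fin N)) \ {i,k} := by
    intro T
    constructor
    · rintro ⟨h1, h2⟩ j hj
      have := h1 hj
      simp only [Finset.mem_erase] at this
      simp only [Finset.mem_sdiff, Finset.mem_univ, true_and, Finset.mem_insert,
        Finset.mem_singleton]
      push_neg
      exact ⟨fun h => h2 (h ▸ hj), this.1⟩
    · intro h
      constructor
      · intro j hj
        have := h hj
        simp only [Finset.mem_sdiff, Finset.mem_univ, true_and, Finset.mem_insert,
          Finset.mem_singleton] at this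
        push_neg at this
        exact Finset.mem_erase.mpr ⟨this.2, Finset.mem_univ j⟩
      · intro hi
        have := h hi
        simp [Finset.mem_sdiff] at this
  rw [← Finset.sum_filter_add_sum_filter_not 𝒮 (fun S => i ∈ S)]
  have h1 : ∑ S ∈ 𝒮.filter (fun S => i ∈ S),
      ((if i ∈ S then (1:ℝ) else -1) * Jint i k (S.erase i) lam)
      = ∑ W ∈ A, Jint i k W lam := by
    refine Finset.sum_nbij' (fun S => S.erase i) (fun W => insert i W) ?_ ?_ ?_ ?_ ?_
    · intro S hS
      simp only [h𝒮, Finset.mem_filter, Finset.mem_powerset] at hS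
      obtain ⟨⟨hSsub, hScard⟩, hiS⟩ := hS
      simp only [hA, Finset.mem_filter, Finset.mem_powerset]
      refine ⟨((hsub_iff (S.erase i)).mp ⟨fun j hj => hSsub (Finset.erase_subset i S hj),
        Finset.notMem_erase i S⟩), ?_⟩
      have hpos : 1 ≤ S.card := Finset.card_pos.mpr ⟨i, hiS⟩
      rw [Finset.card_erase_of_mem hiS]
      omega
    · intro W hW
      simp only [hA, Finset.mem_filter, Finset.mem_powerset] at hW
      obtain ⟨hWsub, hWcard⟩ := hW
      have hiW : i ∉ W := ((hsub_iff W).mpr hWsub).2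
      simp only [h𝒮, Finset.mem_filter, Finset.mem_powerset]
      refine ⟨⟨?_, ?_⟩, Finset.mem_insert_self i W⟩
      · intro j hj
        rcases Finset.mem_insert.mp hj with h | h
        · subst h; exact Finset.mem_erase.mpr ⟨hik, Finset.mem_univ j⟩
        · exact ((hsub_iff W).mpr hWsub).1 h
      · rw [Finset.card_insert_of_notMem hiW]; omega
    · intro S hS
      simp only [h𝒮, Finset.mem_filter] at hS
      exact Finset.insert_erase hS.2
    · intro W hW
      simp only [hA, Finset.mem_filter, Finset.mem_powerset] at hW
      exact Finset.erase_insert (((hsub_iff W).mpr hW.1).2)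
    · intro S hS
      simp only [Finset.mem_filter] at hS
      rw [if_pos hS.2, one_mul]
  have h2 : 𝒮.filter (fun S => ¬ i ∈ S) = B := by
    ext T
    simp only [h𝒮, hB, Finset.mem_filter, Finset.mem_powerset]
    constructor
    · rintro ⟨⟨ha, hb⟩, hc⟩
      exact ⟨(hsub_iff T).mp ⟨ha, hc⟩, hb⟩
    · rintro ⟨ha, hb⟩
      have := (hsub_iff T).mpr ha
      exact ⟨⟨this.1, hb⟩, this.2⟩
  have h3 : ∑ S ∈ 𝒮.filter (fun S => ¬ i ∈ S),
      ((if i ∈ S then (1:ℝ) else -1) * Jint i k (S.erase i) lam)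
      = - ∑ W ∈ B, Jint i k W lam := by
    rw [h2, ← Finset.sum_neg_distrib]
    refine Finset.sum_congr rfl fun W hW => ?_
    simp only [hB, Finset.mem_filter, Finset.mem_powerset] at hW
    have hiW : i ∉ W := ((hsub_iff W).mpr hW.1).2
    rw [if_neg hiW, Finset.erase_eq_of_notMem hiW]
    ring
  rw [h1, h3]
  have hAB : A ⊆ B := by
    rw [hA, hB]
    apply Finset.monotone_filter_right
    intro W hW
    omega
  have hBA : B \ A = ((Finset.univ : Finset (Fin N)) \ {i,k}).powersetCard (C-1) := by
    ext W
    simp only [hB, hA, Finset.mem_sdiff, Finset.mem_filter, Finset.mem_powerset,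
      Finset.mem_powersetCard, not_and]
    constructor
    · rintro ⟨⟨ha, hb⟩, hc⟩
      have := hc ha
      exact ⟨ha, by omega⟩
    · rintro ⟨ha, hb⟩
      exact ⟨⟨ha, by omega⟩, fun _ => by omega⟩
  have hsplit := Finset.sum_sdiff (f := fun W => Jint i k W lam) hAB
  rw [hBA] at hsplit
  linarith
end Comb


section Glink
variable {N : ℕ} (i k : Fin N) (lam : Fin N → ℝ)

lemma prodP_bounds (hlam : ∀ j, 0 < lam j) (A B : Finset (Fin N)) {t : ℝ} (ht : 0 ≤ t) :
    0 ≤ (∏ j ∈ A, (1 - Real.exp (-(lam j)*t))) * ∏ j ∈ B, Real.exp (-(lam j)*t) ∧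
    (∏ j ∈ A, (1 - Real.exp (-(lam j)*t))) * ∏ j ∈ B, Real.exp (-(lam j)*t) ≤ 1 := by
  have h1 : ∀ j : Fin N, 0 ≤ 1 - Real.exp (-(lam j)*t) ∧ 1 - Real.exp (-(lam j)*t) ≤ 1 := by
    intro j
    have h2 : Real.exp (-(lam j)*t) ≤ 1 := by
      rw [Real.exp_le_one_iff]; nlinarith [hlam j]
    have h3 : 0 < Real.exp (-(lam j)*t) := Real.exp_pos _
    constructor <;> linarith
  have h4 : ∀ j : Fin N, 0 ≤ Real.exp (-(lam j)*t) ∧ Real.exp (-(lam j)*t) ≤ 1 :=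
    fun j => ⟨(Real.exp_pos _).le, by rw [Real.exp_le_one_iff]; nlinarith [hlam j]⟩
  constructor
  · exact mul_nonneg (Finset.prod_nonneg fun j _ => (h1 j).1)
      (Finset.prod_nonneg fun j _ => (h4 j).1)
  · have := mul_le_mul
        (Finset.prod_le_one (s := A) (fun j _ => (h1 j).1) fun j _ => (h1 j).2)
        (Finset.prod_le_one (s := B) (fun j _ => (h4 j).1) fun j _ => (h4 j).2)
        (Finset.prod_nonneg (s := B) fun j _ => (h4 j).1) zero_le_one
    simpa using this

lemma integrableOn_base (hlam : ∀ j, 0 < lam j) {c : ℝ} (hc : 0 < c)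
    (A B : Finset (Fin N)) :
    IntegrableOn (fun t : ℝ => (t * Real.exp (-c*t)) *
      ((∏ j ∈ A, (1 - Real.exp (-(lam j)*t))) * ∏ j ∈ B, Real.exp (-(lam j)*t)))
      (Set.Ioi (0:ℝ)) := by
  refine (integrableOn_id_mul_exp hc).integrable.mono ?_ ?_
  · apply Continuous.aestronglyMeasurable
    apply Continuous.mul (by fun_prop)
    apply Continuous.mul
    · apply continuous_finset_prod; intro j _; fun_prop
    · apply continuous_finset_prod; intro j _; fun_prop
  · filter_upwards [ae_restrict_mem measurableSet_Ioi] with t ht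
    have ht0 : (0:ℝ) < t := ht
    have hP := prodP_bounds lam hlam A B ht0.le
    have hte : (0:ℝ) ≤ t * Real.exp (-c*t) := mul_nonneg ht0.le (Real.exp_pos _).le
    rw [Real.norm_eq_abs, Real.norm_eq_abs, abs_of_nonneg (mul_nonneg hte hP.1),
      abs_of_nonneg hte]
    calc t * Real.exp (-c*t) * ((∏ j ∈ A, (1 - Real.exp (-(lam j)*t))) *
          ∏ j ∈ B, Real.exp (-(lam j)*t)) ≤ t * Real.exp (-c*t) * 1 :=
        mul_le_mul_of_nonneg_left hP.2 hte
      _ = t * Real.exp (-c*t) := mul_one _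

lemma integrableOn_Jint_integrand (hlam : ∀ j, 0 < lam j) (W : Finset (Fin N)) :
    IntegrableOn (fun t : ℝ => lam k * (t * Real.exp (-(lam i + lam k)*t)) *
      ((∏ j ∈ W, (1 - Real.exp (-(lam j)*t))) *
       ∏ j ∈ (((Finset.univ : Finset (Fin N)) \ {i, k}) \ W), Real.exp (-(lam j)*t)))
      (Set.Ioi (0:ℝ)) := by
  have hc : 0 < lam i + lam k := by have := hlam i; have := hlam k; linarith
  have := (integrableOn_base lam hlam hc W
    ((((Finset.univ : Finset (Fin N)) \ {i, k}) \ W))).const_mul (lam k)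
  exact this.congr (Filter.EventuallyEq.of_eq (funext fun t => by ring))

lemma sum_Jint_eq (C : ℕ) (hlam : ∀ j, 0 < lam j) :
    ∑ W ∈ (((Finset.univ : Finset (Fin N)) \ {i,k}).powersetCard (C-1)),
      Jint i k W lam = lam k * Gkernel N C i k lam := by
  rw [Gkernel, ← integral_const_mul]
  simp only [Jint]
  rw [← integral_finset_sum _ (fun W _ => integrableOn_Jint_integrand i k lam hlam W)]
  refine setIntegral_congr_fun measurableSet_Ioi fun t _ => ?_
  simp only [Finset.mul_sum]
  exact Finset.sum_congr rfl fun W _ => by ring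

lemma Gkernel_symm (C : ℕ) : Gkernel N C i k lam = Gkernel N C k i lam := by
  unfold Gkernel
  congr 1
  funext t
  rw [Finset.pair_comm i k, add_comm (lam i) (lam k)]

lemma Gkernel_pos (C : ℕ) (hik : i ≠ k) (hC1 : 1 ≤ C) (hCN : C < N)
    (hlam : ∀ j, 0 < lam j) : 0 < Gkernel N C i k lam := by
  classical
  have hc : 0 < lam i + lam k := by have := hlam i; have := hlam k; linarith
  set pc := (((Finset.univ : Finset (Fin N)) \ {i,k}).powersetCard (C-1)) with hpc
  have hcard : ((Finset.univ : Finset (Fin N)) \ {i,k}).card = N - 2 := by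
    rw [Finset.card_sdiff_of_subset (Finset.subset_univ _), Finset.card_univ, Fintype.card_fin,
      Finset.card_pair hik]
  have hpcne : pc.Nonempty := by
    rw [hpc]
    apply Finset.powersetCard_nonempty_of_le
    omega
  set g : ℝ → ℝ := fun t => t * Real.exp (-(lam i + lam k) * t) *
      ∑ W ∈ pc, (∏ j ∈ W, (1 - Real.exp (-(lam j) * t))) *
        ∏ j ∈ ((Finset.univ : Finset (Fin N)) \ {i, k}) \ W, Real.exp (-(lam j) * t) with hg
  have hgint : IntegrableOn g (Set.Ioi (0:ℝ)) := by
    have hsum : IntegrableOn (fun t : ℝ => ∑ W ∈ pc,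
        ((t * Real.exp (-(lam i + lam k)*t)) *
          ((∏ j ∈ W, (1 - Real.exp (-(lam j)*t))) *
           ∏ j ∈ ((Finset.univ : Finset (Fin N)) \ {i, k}) \ W, Real.exp (-(lam j)*t))))
        (Set.Ioi (0:ℝ)) :=
      integrable_finset_sum _ (fun W _ => integrableOn_base lam hlam hc W _)
    refine hsum.congr_fun (fun t _ => ?_) measurableSet_Ioi
    simp only [hg]
    rw [Finset.mul_sum]
  have hgnonneg : ∀ t ∈ Set.Ioi (0:ℝ), 0 ≤ g t := by
    intro t ht
    have ht0 : (0:ℝ) < t := ht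
    refine mul_nonneg (mul_nonneg ht0.le (Real.exp_pos _).le)
      (Finset.sum_nonneg fun W _ => (prodP_bounds lam hlam W _ ht0.le).1)
  have hgpos : ∀ t ∈ Set.Ioi (0:ℝ), 0 < g t := by
    intro t ht
    have ht0 : (0:ℝ) < t := ht
    refine mul_pos (mul_pos ht0 (Real.exp_pos _)) ?_
    obtain ⟨W₀, hW₀⟩ := hpcne
    refine Finset.sum_pos' (fun W _ => (prodP_bounds lam hlam W _ ht0.le).1) ⟨W₀, hW₀, ?_⟩
    apply mul_pos
    · apply Finset.prod_pos
      intro j _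
      have : Real.exp (-(lam j)*t) < 1 := by
        rw [Real.exp_lt_one_iff]
        nlinarith [hlam j]
      linarith
    · exact Finset.prod_pos fun j _ => Real.exp_pos _
  have := (setIntegral_pos_iff_support_of_nonneg_ae
    (f := g) (s := Set.Ioi (0:ℝ)) (μ := volume) ?_ hgint).mpr ?_
  · exact this
  · filter_upwards [ae_restrict_mem measurableSet_Ioi] with t ht
    exact hgnonneg t ht
  · have hsub : Set.Ioi (0:ℝ) ⊆ Function.support g ∩ Set.Ioi 0 :=
      fun t ht => ⟨ne_of_gt (hgpos t ht), ht⟩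
    calc (0:ℝ≥0∞) < volume (Set.Ioi (0:ℝ)) := by simp
      _ ≤ volume (Function.support g ∩ Set.Ioi 0) := measure_mono hsub
end Glink

/-- Occupancy sensitivity: for `i ≠ k` and every `λ ∈ (0,∞)^N`, the partial
derivative `∂π_k/∂λ_i` exists and equals `-λ_k G_{ik}(λ)`; moreover
`G_{ik}(λ) = G_{ki}(λ)` and `G_{ik}(λ) > 0`. -/
theorem occupancy_sensitivity (N C : ℕ) (hN : 2 ≤ N) (hC1 : 1 ≤ C) (hCN : C < N)
    (i k : Fin N) (hik : i ≠ k)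
    (lam : Fin N → ℝ) (hlam : ∀ j, 0 < lam j) :
    HasDerivAt (fun x : ℝ => occ N C k (Function.update lam i x))
        (-(lam k) * Gkernel N C i k lam) (lam i) ∧
      Gkernel N C i k lam = Gkernel N C k i lam ∧
      0 < Gkernel N C i k lam := by
  classical
  obtain ⟨n, rfl⟩ : ∃ n, N = n + 1 := ⟨N - 1, by omega⟩
  refine ⟨?_, Gkernel_symm i k lam C, Gkernel_pos i k lam C hik hC1 hCN hlam⟩
  set 𝒮 := (Finset.univ.erase k).powerset.filter
    (fun S : Finset (Fin (n+1)) => S.card ≤ C - 1) with h𝒮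
  have hS_sub : ∀ S ∈ 𝒮, S ⊆ Finset.univ.erase k := fun S hS =>
    (Finset.mem_powerset.mp (Finset.mem_filter.mp hS).1)
  have hsum : HasDerivAt (fun x => ∑ S ∈ 𝒮, wInt k S (Function.update lam i x))
      (∑ S ∈ 𝒮, ((if i ∈ S then (1:ℝ) else -1) * Jint i k (S.erase i) lam)) (lam i) :=
    HasDerivAt.fun_sum fun S hS => hasDerivAt_wInt i k S lam hik (hS_sub S hS) hlam
  have heval : (∑ S ∈ 𝒮, ((if i ∈ S then (1:ℝ) else -1) * Jint i k (S.erase i) lam))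
      = -(lam k) * Gkernel (n+1) C i k lam := by
    rw [h𝒮, sum_signed i k lam hik C hC1, sum_Jint_eq i k lam C hlam]
    ring
  rw [heval] at hsum
  have hev : (fun x : ℝ => occ (n+1) C k (Function.update lam i x))
      =ᶠ[nhds (lam i)] (fun x => ∑ S ∈ 𝒮, wInt k S (Function.update lam i x)) := by
    filter_upwards [Ioi_mem_nhds (hlam i)] with x hx
    have hlam' : ∀ j, 0 < Function.update lam i x j := by
      intro j
      by_cases hj : j = i
      · subst hj; rw [Function.update_self]; exact hx
      · rw [Function.update_of_ne hj x lam]; exact hlam j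
    exact occ_eq_sum k (Function.update lam i x) C hlam'
  exact hsum.congr_of_eventuallyEq hev
end
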